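/- arXiv:1806.00517 — 6 statements merged into one kernel-verified Lean document; each statement's English description precedes it below -/
import Mathlib

section
/- Let p and N be primes with p odd and p dividing N − 1. Then the polynomial X^p − N has a root in the N-th cyclotomic extension of the field ℚ_N of N-adic numbers; that is, there exists an element x of the N-th cyclotomic field over ℚ_N with x^p = N. -/
set_option maxHeartbeats 1000000
set_option synthInstance.maxHeartbeats 400000

open Polynomial

namespace Statement9Aux

variable (N : ℕ) [hN : Fact N.Prime]

/-- The power basis of `ℤ_[N][X]/(Φ_N)` over `ℤ_[N]`. -/
noncomputable def pb : PowerBasis ℤ_[N] (AdjoinRoot (cyclotomic N ℤ_[N])) :=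
  AdjoinRoot.powerBasis' (cyclotomic.monic N ℤ_[N])

lemma mem_span_pow_iff (x : AdjoinRoot (cyclotomic N ℤ_[N])) (n : ℕ) :
    x ∈ Ideal.span {(N : AdjoinRoot (cyclotomic N ℤ_[N]))} ^ n ↔
      ∀ i, (pb N).basis.repr x i ∈ Ideal.span {(N : ℤ_[N])} ^ n := by
  rw [Ideal.span_singleton_pow, Ideal.mem_span_singleton]
  simp_rw [Ideal.span_singleton_pow, Ideal.mem_span_singleton]
  constructor
  · rintro ⟨y, rfl⟩ i
    have h : (N : AdjoinRoot (cyclotomic N ℤ_[N])) ^ n * y = ((N : ℤ_[N]) ^ n) • y := by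
      rw [Algebra.smul_def, map_pow, map_natCast]
    rw [h, map_smul, Finsupp.smul_apply, smul_eq_mul]
    exact dvd_mul_right _ _
  · intro h
    choose c hc using h
    refine ⟨∑ i, c i • (pb N).basis i, ?_⟩
    calc x = ∑ i, ((pb N).basis.repr x i) • (pb N).basis i := ((pb N).basis.sum_repr x).symm
    _ = ((N : ℤ_[N]) ^ n) • ∑ i, c i • (pb N).basis i := by
        rw [Finset.smul_sum]
        refine Finset.sum_congr rfl fun i _ => ?_
        rw [hc i, smul_smul]
    _ = (N : AdjoinRoot (cyclotomic N ℤ_[N])) ^ n * ∑ i, c i • (pb N).basis i := by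
        rw [Algebra.smul_def, map_pow, map_natCast]

lemma adicComplete :
    IsAdicComplete (Ideal.span {(N : AdjoinRoot (cyclotomic N ℤ_[N]))})
      (AdjoinRoot (cyclotomic N ℤ_[N])) := by
  have hspan : Ideal.span {(N : ℤ_[N])} = IsLocalRing.maximalIdeal ℤ_[N] :=
    (PadicInt.maximalIdeal_eq_span_p).symm
  have hZ : IsAdicComplete (Ideal.span {(N : ℤ_[N])}) ℤ_[N] := by
    rw [hspan]; infer_instance
  refine { toIsHausdorff := ⟨?_⟩, toIsPrecomplete := ⟨?_⟩ }
  · intro x hx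
    have hmem : ∀ n, ∀ i, (pb N).basis.repr x i ∈ Ideal.span {(N : ℤ_[N])} ^ n := by
      intro n
      refine (mem_span_pow_iff N x n).mp ?_
      have := hx n
      simpa only [← Ideal.one_eq_top, smul_eq_mul, mul_one, SModEq.zero] using this
    refine (pb N).basis.ext_elem fun i => ?_
    rw [map_zero, Finsupp.zero_apply]
    refine hZ.toIsHausdorff.haus' _ fun n => ?_
    simpa only [← Ideal.one_eq_top, smul_eq_mul, mul_one, SModEq.zero] using hmem n i
  · intro f hf
    have H : ∀ i, ∃ L : ℤ_[N], ∀ n, (pb N).basis.repr (f n) i ≡ L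
        [SMOD (Ideal.span {(N : ℤ_[N])} ^ n • ⊤ : Submodule ℤ_[N] ℤ_[N])] := by
      intro i
      refine hZ.toIsPrecomplete.prec' (fun n => (pb N).basis.repr (f n) i) ?_
      intro m n hmn
      have h1 := hf hmn
      simp only [← Ideal.one_eq_top, smul_eq_mul, mul_one, SModEq.sub_mem] at h1 ⊢
      have h2 := (mem_span_pow_iff N _ m).mp h1 i
      simpa only [map_sub, Finsupp.sub_apply] using h2
    choose L hL using H
    refine ⟨(pb N).basis.repr.symm (Finsupp.equivFunOnFinite.symm L), fun n => ?_⟩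
    simp only [← Ideal.one_eq_top, smul_eq_mul, mul_one, SModEq.sub_mem]
    refine (mem_span_pow_iff N _ n).mpr fun i => ?_
    have h3 : (pb N).basis.repr ((pb N).basis.repr.symm (Finsupp.equivFunOnFinite.symm L)) i
        = L i := by
      rw [LinearEquiv.apply_symm_apply]
      rfl
    have h4 := hL i n
    simp only [← Ideal.one_eq_top, smul_eq_mul, mul_one, SModEq.sub_mem] at h4
    rw [map_sub, Finsupp.sub_apply, h3]
    exact h4

lemma charP_quot :
    CharP (AdjoinRoot (cyclotomic N ℤ_[N]) ⧸
      Ideal.span {(N : AdjoinRoot (cyclotomic N ℤ_[N]))}) N := by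
  constructor
  intro a
  rw [← map_natCast (Ideal.Quotient.mk (Ideal.span {(N : AdjoinRoot (cyclotomic N ℤ_[N]))})) a,
    Ideal.Quotient.eq_zero_iff_mem]
  constructor
  · intro h
    have hdim : 0 < (pb N).dim := by
      have : (pb N).dim = (cyclotomic N ℤ_[N]).natDegree := rfl
      rw [this, natDegree_cyclotomic]
      exact Nat.totient_pos.mpr hN.out.pos
    have h1 : ((a : ℕ) : AdjoinRoot (cyclotomic N ℤ_[N]))
        ∈ Ideal.span {(N : AdjoinRoot (cyclotomic N ℤ_[N]))} ^ 1 := by rwa [pow_one]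
    have h2 := (mem_span_pow_iff N _ 1).mp h1 ⟨0, hdim⟩
    rw [pow_one, Ideal.mem_span_singleton] at h2
    have hrepr : (pb N).basis.repr ((a : ℕ) : AdjoinRoot (cyclotomic N ℤ_[N])) ⟨0, hdim⟩
        = (a : ℤ_[N]) := by
      have e1 : ((a : ℕ) : AdjoinRoot (cyclotomic N ℤ_[N]))
          = (a : ℤ_[N]) • (1 : AdjoinRoot (cyclotomic N ℤ_[N])) := by
        rw [Algebra.smul_def, mul_one, map_natCast]
      have e2 : (1 : AdjoinRoot (cyclotomic N ℤ_[N])) = (pb N).basis ⟨0, hdim⟩ := by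
        rw [(pb N).basis_eq_pow]; simp
      rw [e1, map_smul, e2, (pb N).basis.repr_self, Finsupp.smul_apply, Finsupp.single_eq_same,
        smul_eq_mul, mul_one]
    rw [hrepr] at h2
    obtain ⟨t, ht⟩ := h2
    have h3 := congrArg PadicInt.toZMod ht
    rw [map_natCast, map_mul, map_natCast, ZMod.natCast_self, zero_mul] at h3
    exact (ZMod.natCast_eq_zero_iff a N).mp h3
  · rintro ⟨t, rfl⟩
    rw [Nat.cast_mul]
    exact Ideal.mem_span_singleton.mpr (dvd_mul_right _ _)

/-- The key cyclotomic product identity: `∏_{j=1}^{N-1} (1 - ζ^j) = N`. -/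
lemma prod_one_sub_pow {K : Type*} [Field K] {ζ : K} (hζ : IsPrimitiveRoot ζ N) :
    ∏ j ∈ Finset.range (N - 1), (1 - ζ ^ (j + 1)) = (N : K) := by
  classical
  have hpos := hN.out.pos
  have h2 := hN.out.two_le
  have h1 : (1 : K) ∈ nthRootsFinset N (1 : K) := one_mem_nthRootsFinset hpos
  have key : (∑ i ∈ Finset.range N, (X : K[X]) ^ i)
      = ∏ μ ∈ (nthRootsFinset N (1 : K)).erase 1, (X - C μ) := by
    have hne : (X - 1 : K[X]) ≠ 0 := by
      intro h
      have := congrArg (Polynomial.eval 0) h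
      simp at this
    apply mul_right_cancel₀ hne
    rw [geom_sum_mul, X_pow_sub_one_eq_prod hpos hζ, ← Finset.mul_prod_erase _ _ h1]
    rw [mul_comm, map_one]
  have hev := congrArg (Polynomial.eval 1) key
  rw [eval_finset_sum, eval_prod] at hev
  simp only [eval_pow, eval_X, one_pow, Finset.sum_const, Finset.card_range, smul_eq_mul,
    mul_one, eval_sub, eval_C, eval_one] at hev
  rw [nsmul_eq_mul, mul_one] at hev
  rw [hev]
  haveI : NeZero N := ⟨hN.out.ne_zero⟩
  refine Finset.prod_bij (fun j _ => ζ ^ (j + 1)) ?_ ?_ ?_ ?_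
  · intro j hj
    rw [Finset.mem_range] at hj
    rw [Finset.mem_erase]
    refine ⟨hζ.pow_ne_one_of_pos_of_lt (Nat.succ_ne_zero j) (by omega), ?_⟩
    rw [mem_nthRootsFinset hpos, ← pow_mul, mul_comm, pow_mul, hζ.pow_eq_one, one_pow]
  · intro j hj k hk hjk
    rw [Finset.mem_range] at hj hk
    have := hζ.pow_inj (by omega) (by omega) hjk
    omega
  · intro μ hμ
    rw [Finset.mem_erase, mem_nthRootsFinset hpos] at hμ
    obtain ⟨i, hik, hiμ⟩ := hζ.eq_pow_of_pow_eq_one hμ.2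
    have hi0 : i ≠ 0 := by
      rintro rfl
      rw [pow_zero] at hiμ
      exact hμ.1 hiμ.symm
    refine ⟨i - 1, Finset.mem_range.mpr (by omega), ?_⟩
    show ζ ^ (i - 1 + 1) = μ
    rw [Nat.sub_add_cancel (by omega)]
    exact hiμ
  · intro j hj
    rfl

end Statement9Aux

open Statement9Aux in
/-- For primes `p` (odd) and `N` with `p ∣ N - 1`, the polynomial `X^p - N` has a root
in the `N`-th cyclotomic extension of `ℚ_N`. -/
theorem statement9 (p N : ℕ) (hp : p.Prime) (hpodd : Odd p) [hN : Fact N.Prime]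
    (hdvd : p ∣ N - 1) :
    ∃ x : CyclotomicField N ℚ_[N],
      x ^ p = (N : CyclotomicField N ℚ_[N]) := by
  classical
  have hN2 : 2 ≤ N := hN.out.two_le
  -- The integral model `R = ℤ_[N][X]/(Φ_N)`.
  set R : Type := AdjoinRoot (cyclotomic N ℤ_[N]) with hRdef
  set I : Ideal R := Ideal.span {(N : R)} with hIdef
  set ρ : R := AdjoinRoot.root (cyclotomic N ℤ_[N]) with hρdef
  -- `∑_{i<N} ρ^i = 0` and `ρ^N = 1`.
  have hsum : (∑ i ∈ Finset.range N, ρ ^ i) = 0 := by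
    have h0 : AdjoinRoot.mk (cyclotomic N ℤ_[N]) (∑ i ∈ Finset.range N, (X : ℤ_[N][X]) ^ i)
        = 0 := by
      rw [← cyclotomic_prime ℤ_[N] N]
      exact AdjoinRoot.mk_self
    simpa only [map_sum, map_pow, AdjoinRoot.mk_X] using h0
  have hρN : ρ ^ N = 1 := by
    have h1 := geom_sum_mul ρ N
    rw [hsum, zero_mul] at h1
    exact sub_eq_zero.mp h1.symm
  -- The unit `U` with `(1 - ρ)^(N-1) * U = N`.
  set U : R := ∏ j ∈ Finset.range (N - 1), ∑ i ∈ Finset.range (j + 1), ρ ^ i with hUdef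
  -- Work in the quotient `Q = R/(N)`.
  set mkQ := Ideal.Quotient.mk I with hmkQ
  haveI hcharQ : CharP (R ⧸ I) N := charP_quot N
  set ζq : R ⧸ I := mkQ ρ with hζq
  set Uq : R ⧸ I := mkQ U with hUq
  -- `(ζq - 1)` is nilpotent.
  have hlamN : (ζq - 1) ^ N = 0 := by
    have hf := sub_pow_char (p := N) ζq (1 : R ⧸ I)
    rw [one_pow] at hf
    rw [hf, hζq, ← map_pow, hρN, map_one, sub_self]
  -- `Uq ≡ (N-1)!  mod (ζq - 1)`.
  set J : Ideal (R ⧸ I) := Ideal.span {ζq - 1} with hJdef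
  have hUJ : Uq - (((N - 1).factorial : ℕ) : R ⧸ I) ∈ J := by
    rw [← Ideal.Quotient.eq]
    have hζJ : Ideal.Quotient.mk J ζq = 1 := by
      rw [← map_one (Ideal.Quotient.mk J), Ideal.Quotient.eq]
      exact Ideal.mem_span_singleton.mpr dvd_rfl
    rw [hUq, hmkQ]
    rw [hUdef]
    rw [map_prod, map_prod]
    simp only [map_sum, map_pow, show Ideal.Quotient.mk I ρ = ζq from rfl, hζJ, one_pow]
    simp only [Finset.sum_const, Finset.card_range, nsmul_eq_mul, mul_one]
    rw [map_natCast, ← Nat.cast_prod, Finset.prod_range_add_one_eq_factorial]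
  have hwilson : (((N - 1).factorial : ℕ) : R ⧸ I) = -1 := by
    have hdvdW : N ∣ (N - 1).factorial + 1 := by
      have hw : (((N - 1).factorial + 1 : ℕ) : ZMod N) = 0 := by
        push_cast
        rw [ZMod.wilsons_lemma]
        ring
      exact (ZMod.natCast_eq_zero_iff _ N).mp hw
    have h5 : (((N - 1).factorial + 1 : ℕ) : R ⧸ I) = 0 :=
      (CharP.cast_eq_zero_iff (R ⧸ I) N _).mpr hdvdW
    push_cast at h5
    exact eq_neg_of_add_eq_zero_left h5
  -- `Uq + 1` is nilpotent.
  have hUnil : IsNilpotent (Uq + 1) := by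
    have hmem : Uq + 1 ∈ J := by
      have h7 := hUJ
      rw [hwilson, sub_neg_eq_add] at h7
      exact h7
    obtain ⟨t, ht⟩ := Ideal.mem_span_singleton.mp hmem
    exact ⟨N, by rw [ht, mul_pow, hlamN, zero_mul]⟩
  -- `u = -Uq` is `1 + nilpotent`.
  set u : R ⧸ I := -Uq with hu
  have hun : IsNilpotent (u - 1) := by
    have h8 : u - 1 = -(Uq + 1) := by rw [hu]; ring
    rw [h8]
    exact hUnil.neg
  obtain ⟨m, hm⟩ := hun
  have hMm : m ≤ N ^ (m + 1) := by
    calc m ≤ N ^ m := (Nat.lt_pow_self (n := m) hN.out.one_lt).le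
    _ ≤ N ^ (m + 1) := Nat.pow_le_pow_right (by omega) (by omega)
  have huM : u ^ N ^ (m + 1) = 1 := by
    have h4 : (u - 1) ^ N ^ (m + 1) = 0 := by
      rw [show N ^ (m + 1) = (N ^ (m + 1) - m) + m from (Nat.sub_add_cancel hMm).symm,
        pow_add, hm, mul_zero]
    have h5 : (1 + (u - 1)) ^ N ^ (m + 1)
        = 1 ^ N ^ (m + 1) + (u - 1) ^ N ^ (m + 1) := add_pow_char_pow ..
    calc u ^ N ^ (m + 1) = (1 + (u - 1)) ^ N ^ (m + 1) := by ring_nf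
    _ = 1 ^ N ^ (m + 1) + (u - 1) ^ N ^ (m + 1) := h5
    _ = 1 := by rw [one_pow, h4, add_zero]
  have hpN : p ≠ N := by
    intro h
    subst h
    exact absurd (Nat.le_of_dvd (by omega) hdvd) (by omega)
  have hcop : Nat.Coprime p (N ^ (m + 1)) :=
    ((Nat.coprime_primes hp hN.out).mpr hpN).pow_right _
  have hM1 : (1 : ℕ) < N ^ (m + 1) := by
    calc 1 < N := hN.out.one_lt
    _ ≤ N ^ (m + 1) := Nat.le_self_pow (by omega) N
  obtain ⟨b, -, hb⟩ := Nat.exists_mul_mod_eq_one_of_coprime hcop hM1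
  have hdm := Nat.div_add_mod (p * b) (N ^ (m + 1))
  rw [hb] at hdm
  have hw : (u ^ b) ^ p = u := by
    rw [← pow_mul, mul_comm b p, ← hdm, pow_add, pow_mul, huM, one_pow, pow_one, one_mul]
  set a0q : R ⧸ I := -(u ^ b) with ha0q
  have ha0p : a0q ^ p = Uq := by
    rw [ha0q, Odd.neg_pow hpodd, hw, hu, neg_neg]
  have huUnit : IsUnit u := IsUnit.of_pow_eq_one huM (by positivity)
  have ha0Unit : IsUnit a0q := by rw [ha0q]; exact (huUnit.pow b).neg
  have hpUnit : IsUnit ((p : ℕ) : R ⧸ I) := by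
    have hcopN : Nat.Coprime p N := (Nat.coprime_primes hp hN.out).mpr hpN
    obtain ⟨c, -, hc⟩ := Nat.exists_mul_mod_eq_one_of_coprime hcopN hN.out.one_lt
    have hdm2 := Nat.div_add_mod (p * c) N
    rw [hc] at hdm2
    refine IsUnit.of_mul_eq_one ((c : ℕ) : R ⧸ I) ?_
    have h6 : ((N * (p * c / N) + 1 : ℕ) : R ⧸ I) = ((p * c : ℕ) : R ⧸ I) := by rw [hdm2]
    push_cast at h6
    rw [CharP.cast_eq_zero (R ⧸ I) N, zero_mul, zero_add] at h6
    exact h6.symm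
  -- Lift `a0q` and apply Hensel's lemma.
  obtain ⟨a0, ha0⟩ := Ideal.Quotient.mk_surjective a0q
  rw [← hmkQ] at ha0
  haveI : IsAdicComplete I R := adicComplete N
  have hhens : HenselianRing R I := inferInstance
  set F : Polynomial R := Polynomial.X ^ p - Polynomial.C U with hF
  have hFm : F.Monic := monic_X_pow_sub_C U hp.ne_zero
  have h1 : F.eval a0 ∈ I := by
    rw [← Ideal.Quotient.eq_zero_iff_mem, ← hmkQ, hF]
    simp only [eval_sub, eval_pow, eval_X, eval_C, map_sub, map_pow]
    rw [ha0, ← hUq, ha0p, sub_self]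
  have hderiv : F.derivative = Polynomial.C ((p : ℕ) : R) * Polynomial.X ^ (p - 1) := by
    rw [hF, derivative_sub, derivative_C, sub_zero, derivative_X_pow]
  have h2 : IsUnit (Ideal.Quotient.mk I (F.derivative.eval a0)) := by
    rw [← hmkQ, hderiv]
    simp only [eval_mul, eval_C, eval_natCast, eval_pow, eval_X, map_mul, map_pow, map_natCast]
    rw [ha0]
    exact hpUnit.mul (ha0Unit.pow _)
  obtain ⟨a, haroot, -⟩ := hhens.is_henselian F hFm a0 h1 h2
  have ha : a ^ p = U := by
    have h9 := haroot
    rw [Polynomial.IsRoot, hF] at h9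
    simp only [eval_sub, eval_pow, eval_X, eval_C] at h9
    exact sub_eq_zero.mp h9
  -- Map to the cyclotomic field.
  haveI : NeZero ((N : ℕ) : ℚ_[N]) := ⟨Nat.cast_ne_zero.mpr hN.out.ne_zero⟩
  haveI : NeZero N := ⟨hN.out.ne_zero⟩
  set ζ : CyclotomicField N ℚ_[N] :=
    IsCyclotomicExtension.zeta N ℚ_[N]
      (CyclotomicField N ℚ_[N]) with hzeta
  have hζprim : IsPrimitiveRoot ζ N := IsCyclotomicExtension.zeta_spec _ _ _
  set coeK : ℤ_[N] →+* CyclotomicField N ℚ_[N] :=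
    (algebraMap ℚ_[N] (CyclotomicField N ℚ_[N])).comp
      PadicInt.Coe.ringHom with hcoeK
  have h0K : (cyclotomic N ℤ_[N]).eval₂ coeK ζ = 0 := by
    rw [eval₂_eq_eval_map, map_cyclotomic]
    exact hζprim.isRoot_cyclotomic hN.out.pos
  set φ : R →+* CyclotomicField N ℚ_[N] :=
    AdjoinRoot.lift coeK ζ h0K with hphi
  have hφρ : φ ρ = ζ := by
    rw [hphi, hρdef]
    exact AdjoinRoot.lift_root h0K
  refine ⟨(1 - ζ) ^ ((N - 1) / p) * φ a, ?_⟩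
  rw [mul_pow, ← pow_mul, Nat.div_mul_cancel hdvd, ← map_pow, ha]
  rw [hUdef, map_prod]
  simp only [map_sum, map_pow, hφρ]
  rw [← prod_one_sub_pow N hζprim]
  have hconst : (1 - ζ) ^ (N - 1) = ∏ _j ∈ Finset.range (N - 1), (1 - ζ) := by
    rw [Finset.prod_const, Finset.card_range]
  rw [hconst, ← Finset.prod_mul_distrib]
  refine Finset.prod_congr rfl fun j hj => ?_
  have hg := geom_sum_mul ζ (j + 1)
  linear_combination -hg
end

section
/- Let p and N be primes with p odd and N ≡ 1 (mod p), and let i be odd with 1 ≤ i ≤ p−4. Then M_i · S_i is a p-th power in 𝔽_N^×; equivalently, as elements of 𝔽_N^×/(𝔽_N^×)^p one has S_i^{−1} = M_i. -/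
open scoped TensorProduct

/-- The `p`-rank of a commutative group `G`, i.e. `dim_{𝔽_p}(G ⊗ 𝔽_p)`. -/
noncomputable def pRank (p : ℕ) (G : Type*) [CommGroup G] : ℕ :=
  Module.finrank (ZMod p) (ZMod p ⊗[ℤ] Additive G)

/-- The `p`-rank of the class group of the number field `K`. -/
noncomputable def classRank (p : ℕ) (K : Type*) [Field K] : ℕ :=
  pRank p (ClassGroup (NumberField.RingOfIntegers K))

/-- `p` is a regular prime: `p` does not divide the class number of `ℚ(ζ_p)`. -/
def RegularPrime (p : ℕ+) : Prop :=
  ¬ (p : ℕ) ∣ Nat.card (ClassGroup (NumberField.RingOfIntegers (CyclotomicField p ℚ)))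

/-- `M_i = ∏_{k=1}^{N-1} ∏_{a=1}^{k-1} k^{a^i}` as an element of `𝔽_N = ZMod N`. -/
def Mnum (N i : ℕ) : ZMod N :=
  ∏ k ∈ Finset.Icc 1 (N - 1), ∏ a ∈ Finset.Icc 1 (k - 1), (k : ZMod N) ^ (a ^ i)

/-- `S_i = ∏_{k=1}^{p-1} ((Mk)!)^{k^i}` with `M = (N-1)/p`, as an element of `ZMod N`. -/
def Snum (p N i : ℕ) : ZMod N :=
  ∏ k ∈ Finset.Icc 1 (p - 1), (Nat.factorial ((N - 1) / p * k) : ZMod N) ^ (k ^ i)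

/-- `A_m = ∏_{k=1}^{N-1} k^{k^m}` as an element of `ZMod N`. -/
def Anum (N m : ℕ) : ZMod N :=
  ∏ k ∈ Finset.Icc 1 (N - 1), (k : ZMod N) ^ (k ^ m)

/-- Merel's number `C = ∏_{k=1}^{(N-1)/2} k^k` as an element of `ZMod N`. -/
def MerelC (N : ℕ) : ZMod N :=
  ∏ k ∈ Finset.Icc 1 ((N - 1) / 2), (k : ZMod N) ^ k

/-- `x` is a `p`-th power in `𝔽_N`. -/
def IsPthPow (p : ℕ) {N : ℕ} (x : ZMod N) : Prop :=
  ∃ y : ZMod N, y ^ p = x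

/- ---------------- Auxiliary lemmas ---------------- -/

/-- If `x ^ p = 1` then `x ^ a` only depends on `a` mod `p`. -/
lemma auxPowCongr {n p : ℕ} {x : ZMod n} (hx : x ^ p = 1) {a b : ℕ}
    (h : (a : ZMod p) = (b : ZMod p)) : x ^ a = x ^ b := by
  have h2 : a % p = b % p := (ZMod.natCast_eq_natCast_iff a b p).mp h
  conv_lhs => rw [← Nat.div_add_mod a p]
  conv_rhs => rw [← Nat.div_add_mod b p]
  rw [pow_add, pow_add, pow_mul, pow_mul, hx, one_pow, one_pow, one_mul, one_mul, h2]

lemma auxFactProd (a : ℕ) : ∀ n : ℕ, a ≤ n →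
    Nat.factorial a * ∏ k ∈ Finset.Ioc a n, k = Nat.factorial n := by
  intro n h
  induction n, h using Nat.le_induction with
  | base => simp
  | succ n hn ih =>
      rw [Finset.prod_Ioc_succ_top hn, ← mul_assoc, ih, Nat.factorial_succ]
      ring

lemma auxFactCast (N a : ℕ) :
    ((Nat.factorial a : ℕ) : ZMod N) = ∏ j ∈ Finset.Icc 1 a, (j : ZMod N) := by
  rw [← Finset.prod_range_add_one_eq_factorial, ← Finset.Ico_add_one_right_eq_Icc,
    Finset.prod_Ico_eq_prod_range]
  push_cast
  simp [add_comm]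

lemma auxSumUniv {p : ℕ} [NeZero p] (f : ZMod p → ZMod p) :
    ∑ b ∈ Finset.range p, f (b : ZMod p) = ∑ x : ZMod p, f x := by
  refine Finset.sum_nbij' (fun b => (b : ZMod p)) (fun x => x.val)
    (fun a _ => Finset.mem_univ _)
    (fun x _ => Finset.mem_range.mpr (ZMod.val_lt x)) ?_ ?_ (fun a _ => rfl)
  · intro a ha; exact ZMod.val_cast_of_lt (Finset.mem_range.mp ha)
  · intro x _; exact ZMod.natCast_zmod_val x

lemma auxSumPow {p : ℕ} (hp : p.Prime) {m : ℕ} (hm : m < p - 1) :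
    ∑ b ∈ Finset.range p, ((b : ZMod p)) ^ m = 0 := by
  haveI := Fact.mk hp
  haveI : NeZero p := ⟨hp.ne_zero⟩
  rw [auxSumUniv (fun x => x ^ m)]
  exact FiniteField.sum_pow_lt_card_sub_one (K := ZMod p) m (by rwa [ZMod.card])

/-- `Fe i t = ∑_{a < t} a^i`. -/
def Fe (i t : ℕ) : ℕ := ∑ a ∈ Finset.range t, a ^ i

lemma auxBlockSum {p : ℕ} (hp : p.Prime) {i : ℕ} (hip : i < p - 1) (t : ℕ) :
    ((∑ a ∈ Finset.Ico t (t + p), a ^ i : ℕ) : ZMod p) = 0 := by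
  haveI := Fact.mk hp
  haveI : NeZero p := ⟨hp.ne_zero⟩
  rw [Finset.sum_Ico_eq_sum_range]
  simp only [add_tsub_cancel_left]
  push_cast
  have h1 : ∑ b ∈ Finset.range p, ((t : ZMod p) + (b : ZMod p)) ^ i
      = ∑ x : ZMod p, ((t : ZMod p) + x) ^ i := auxSumUniv (fun x => ((t : ZMod p) + x) ^ i)
  have h2 : ∑ x : ZMod p, ((t : ZMod p) + x) ^ i = ∑ x : ZMod p, x ^ i :=
    Equiv.sum_comp (Equiv.addLeft (t : ZMod p)) (fun x => x ^ i)
  rw [h1, h2, ← auxSumUniv (fun x => x ^ i)]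
  exact auxSumPow hp hip

lemma auxFeShift {p : ℕ} (hp : p.Prime) {i : ℕ} (hip : i < p - 1) (q s : ℕ) :
    ((Fe i (q * p + s) : ℕ) : ZMod p) = ((Fe i s : ℕ) : ZMod p) := by
  induction q with
  | zero => simp
  | succ q ih =>
      have h1 : (q + 1) * p + s = (q * p + s) + p := by ring
      have h2 : Fe i ((q * p + s) + p)
          = Fe i (q * p + s) + ∑ a ∈ Finset.Ico (q * p + s) ((q * p + s) + p), a ^ i := by
        simp only [Fe]
        rw [← Finset.sum_range_add_sum_Ico (fun a => a ^ i) (Nat.le_add_right _ _)]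
      rw [h1, h2, Nat.cast_add, auxBlockSum hp hip, add_zero, ih]

/- ---------------- Main theorem ---------------- -/

/-- For primes `p` odd and `N ≡ 1 (mod p)` and odd `1 ≤ i ≤ p - 4`, the product
`M_i · S_i` is a `p`-th power in `𝔽_N^×`; i.e. `S_i⁻¹ = M_i` modulo `p`-th powers. -/
theorem statement10 (p N : ℕ) (hp : p.Prime) (hpodd : Odd p)
    (hN : N.Prime) (hNmod : N % p = 1)
    (i : ℕ) (hi : Odd i) (hi1 : 1 ≤ i) (hi2 : i ≤ p - 4) :
    IsPthPow p (Mnum N i * Snum p N i) := by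
  classical
  haveI hNfact : Fact N.Prime := ⟨hN⟩
  haveI : NeZero N := ⟨hN.ne_zero⟩
  set M : ℕ := (N - 1) / p with hMdef
  have hp2 : 2 ≤ p := hp.two_le
  have hp5 : 5 ≤ p := by omega
  have hN2 : 2 ≤ N := hN.two_le
  have hpN : p < N := by
    rcases lt_trichotomy N p with h | h | h
    · rw [Nat.mod_eq_of_lt h] at hNmod; omega
    · rw [h, Nat.mod_self] at hNmod; omega
    · exact h
  have hdm := Nat.div_add_mod N p
  rw [hNmod] at hdm
  have hn1 : N - 1 = p * (N / p) := by omega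
  have hMeq : M = N / p := by rw [hMdef, hn1, Nat.mul_div_cancel_left _ hp.pos]
  have hMp : M * p = N - 1 := by rw [hMeq, hn1, mul_comm]
  have hM1 : 1 ≤ M := by
    rcases Nat.eq_zero_or_pos M with h | h
    · rw [h] at hMp; omega
    · exact h
  have hNoddn : Odd N := hN.odd_of_ne_two (by omega)
  have hMeven : Even M := by
    have h1 : Even (M * p) := by
      rw [hMp]; rcases hNoddn with ⟨c, hc⟩; exact ⟨c, by omega⟩
    rcases Nat.even_mul.mp h1 with h | h
    · exact h
    · exact absurd h (Nat.not_even_iff_odd.mpr hpodd)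
  have hip : i < p - 1 := by omega
  have hj0 : ∀ j : ℕ, 1 ≤ j → j ≤ N - 1 → (j : ZMod N) ≠ 0 := by
    intro j h1 h2 h
    rw [ZMod.natCast_eq_zero_iff] at h
    have := Nat.le_of_dvd (by omega) h
    omega
  have hχp' : ∀ j : ℕ, 1 ≤ j → j ≤ M * p → ((j : ZMod N) ^ M) ^ p = 1 := by
    intro j h1 h2
    rw [← pow_mul, hMp]
    exact ZMod.pow_card_sub_one_eq_one (hj0 j h1 (by omega))
  -- `Mnum` with explicit exponents
  have hMnumEq : Mnum N i = ∏ k ∈ Finset.Icc 1 (M * p), (k : ZMod N) ^ Fe i k := by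
    rw [Mnum, ← hMp]
    refine Finset.prod_congr rfl fun k hk => ?_
    rw [Finset.prod_pow_eq_pow_sum]
    congr 1
    have hk2 := Finset.mem_Icc.mp hk
    have hIcc : Finset.Icc 1 (k - 1) = Finset.Ico 1 k := by
      ext x; simp only [Finset.mem_Icc, Finset.mem_Ico]; omega
    rw [hIcc]
    simp only [Fe]
    rw [← Finset.sum_range_add_sum_Ico (fun a => a ^ i) hk2.1, Finset.sum_range_one,
      zero_pow (by omega : i ≠ 0), zero_add]
  set R0 : ZMod N :=
    ∏ a ∈ Finset.Icc 1 (M * p), ((Nat.factorial a : ℕ) : ZMod N) ^ (a ^ i) with hR0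
  -- Step A : (Mnum * R0) ^ M = 1
  have hA : (Mnum N i * R0) ^ M = 1 := by
    have h1 : (∏ k ∈ Finset.Icc 1 (M * p), (k : ZMod N) ^ Fe i k)
        = ∏ a ∈ Finset.Icc 1 (M * p), (∏ k ∈ Finset.Ioc a (M * p), (k : ZMod N)) ^ (a ^ i) := by
      have h2 : ∀ k ∈ Finset.Icc 1 (M * p), (k : ZMod N) ^ Fe i k
          = ∏ a ∈ Finset.Icc 1 (M * p), (if a < k then (k : ZMod N) ^ (a ^ i) else 1) := by
        intro k hk
        rw [← Finset.prod_filter]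
        have hk2 := Finset.mem_Icc.mp hk
        have hf : Finset.filter (fun a => a < k) (Finset.Icc 1 (M * p)) = Finset.Ico 1 k := by
          ext x; simp only [Finset.mem_filter, Finset.mem_Icc, Finset.mem_Ico]; omega
        rw [hf, Finset.prod_pow_eq_pow_sum]
        congr 1
        simp only [Fe]
        rw [← Finset.sum_range_add_sum_Ico (fun a => a ^ i) hk2.1, Finset.sum_range_one,
          zero_pow (by omega : i ≠ 0), zero_add]
      rw [Finset.prod_congr rfl h2, Finset.prod_comm]
      refine Finset.prod_congr rfl fun a ha => ?_
      rw [← Finset.prod_filter]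
      have ha2 := Finset.mem_Icc.mp ha
      have hf : Finset.filter (fun k => a < k) (Finset.Icc 1 (M * p)) = Finset.Ioc a (M * p) := by
        ext x; simp only [Finset.mem_filter, Finset.mem_Icc, Finset.mem_Ioc]; omega
      rw [hf, Finset.prod_pow]
    have hswap : Mnum N i * R0
        = ∏ a ∈ Finset.Icc 1 (M * p), ((Nat.factorial (M * p) : ℕ) : ZMod N) ^ (a ^ i) := by
      rw [hMnumEq, h1, hR0, ← Finset.prod_mul_distrib]
      refine Finset.prod_congr rfl fun a ha => ?_
      rw [← mul_pow]
      congr 1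
      have ha2 := Finset.mem_Icc.mp ha
      have h3 := auxFactProd a (M * p) ha2.2
      calc (∏ k ∈ Finset.Ioc a (M * p), (k : ZMod N)) * ((Nat.factorial a : ℕ) : ZMod N)
          = ((Nat.factorial a * ∏ k ∈ Finset.Ioc a (M * p), k : ℕ) : ZMod N) := by
            push_cast; ring
        _ = _ := by rw [h3]
    rw [hswap, ← Finset.prod_pow]
    refine Finset.prod_eq_one fun a _ => ?_
    have hw : ((Nat.factorial (M * p) : ℕ) : ZMod N) = -1 := by
      rw [hMp]; exact ZMod.wilsons_lemma N
    rw [hw, ← pow_mul, mul_comm (a ^ i) M, pow_mul, Even.neg_one_pow hMeven, one_pow]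
  -- `Snum ^ M` in factorial form
  have hSnumEq : Snum p N i ^ M = ∏ k ∈ Finset.Icc 1 (p - 1),
      (∏ j ∈ Finset.Icc 1 (M * k), ((j : ZMod N) ^ M)) ^ (k ^ i) := by
    rw [Snum, ← hMdef, ← Finset.prod_pow]
    refine Finset.prod_congr rfl fun k hk => ?_
    calc ((Nat.factorial (M * k) : ZMod N) ^ (k ^ i)) ^ M
        = ((∏ j ∈ Finset.Icc 1 (M * k), (j : ZMod N)) ^ M) ^ (k ^ i) := by
          rw [auxFactCast, ← pow_mul, ← pow_mul, mul_comm (k ^ i) M]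
      _ = (∏ j ∈ Finset.Icc 1 (M * k), ((j : ZMod N) ^ M)) ^ (k ^ i) := by
          rw [Finset.prod_pow]
  -- flatten R0 ^ M
  have hLflat : R0 ^ M = ∏ j ∈ Finset.Icc 1 (M * p),
      ((j : ZMod N) ^ M) ^ (∑ a ∈ Finset.Icc j (M * p), a ^ i) := by
    rw [hR0, ← Finset.prod_pow]
    have h1 : ∀ a ∈ Finset.Icc 1 (M * p), (((Nat.factorial a : ℕ) : ZMod N) ^ (a ^ i)) ^ M
        = ∏ j ∈ Finset.Icc 1 (M * p), (if j ≤ a then ((j : ZMod N) ^ M) ^ (a ^ i) else 1) := by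
      intro a ha
      have ha2 := Finset.mem_Icc.mp ha
      rw [← Finset.prod_filter]
      have hf : Finset.filter (fun j => j ≤ a) (Finset.Icc 1 (M * p)) = Finset.Icc 1 a := by
        ext x; simp only [Finset.mem_filter, Finset.mem_Icc]; omega
      rw [hf]
      calc (((Nat.factorial a : ℕ) : ZMod N) ^ (a ^ i)) ^ M
          = ((∏ j ∈ Finset.Icc 1 a, (j : ZMod N)) ^ M) ^ (a ^ i) := by
            rw [auxFactCast, ← pow_mul, ← pow_mul, mul_comm (a ^ i) M]
        _ = ∏ j ∈ Finset.Icc 1 a, ((j : ZMod N) ^ M) ^ (a ^ i) := by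
            rw [Finset.prod_pow, Finset.prod_pow]
    rw [Finset.prod_congr rfl h1, Finset.prod_comm]
    refine Finset.prod_congr rfl fun j hj => ?_
    rw [← Finset.prod_filter]
    have hj2 := Finset.mem_Icc.mp hj
    have hf : Finset.filter (fun a => j ≤ a) (Finset.Icc 1 (M * p)) = Finset.Icc j (M * p) := by
      ext x; simp only [Finset.mem_filter, Finset.mem_Icc]; omega
    rw [hf, Finset.prod_pow_eq_pow_sum]
  -- flatten Snum ^ M
  have hSflat : Snum p N i ^ M = ∏ j ∈ Finset.Icc 1 (M * p),
      ∏ k ∈ Finset.filter (fun k => j ≤ M * k) (Finset.Icc 1 (p - 1)),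
        ((j : ZMod N) ^ M) ^ (k ^ i) := by
    rw [hSnumEq]
    have h1 : ∀ k ∈ Finset.Icc 1 (p - 1),
        (∏ j ∈ Finset.Icc 1 (M * k), ((j : ZMod N) ^ M)) ^ (k ^ i)
        = ∏ j ∈ Finset.Icc 1 (M * p), (if j ≤ M * k then ((j : ZMod N) ^ M) ^ (k ^ i) else 1) := by
      intro k hk
      have hk2 := Finset.mem_Icc.mp hk
      have hkM : M * k ≤ M * p := Nat.mul_le_mul (le_refl M) (by omega)
      rw [← Finset.prod_filter]
      have hf : Finset.filter (fun j => j ≤ M * k) (Finset.Icc 1 (M * p))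
          = Finset.Icc 1 (M * k) := by
        ext x; simp only [Finset.mem_filter, Finset.mem_Icc]; omega
      rw [hf, Finset.prod_pow, Finset.prod_pow, Finset.prod_pow]
    rw [Finset.prod_congr rfl h1, Finset.prod_comm]
    refine Finset.prod_congr rfl fun j hj => ?_
    rw [← Finset.prod_filter]
  -- reindexing lemmas
  have hRe1 : ∀ f : ℕ → ZMod N, (∏ j ∈ Finset.Icc 1 (M * p), f j)
      = ∏ r ∈ Finset.Icc 1 p, ∏ q ∈ Finset.range M, f (q * p + r) := by
    intro f
    have key : (∏ j ∈ Finset.Icc 1 (M * p), f j)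
        = ∏ x ∈ Finset.Icc 1 p ×ˢ Finset.range M, f (x.2 * p + x.1) := by
      refine Finset.prod_nbij' (fun y => ((y - 1) % p + 1, (y - 1) / p))
        (fun x => x.2 * p + x.1) ?_ ?_ ?_ ?_ ?_
      · intro y hy
        have hy2 := Finset.mem_Icc.mp hy
        simp only [Finset.mem_product, Finset.mem_Icc, Finset.mem_range]
        have hmod := Nat.mod_lt (y - 1) hp.pos
        refine ⟨⟨by omega, by omega⟩, ?_⟩
        exact Nat.div_lt_of_lt_mul (by rw [Nat.mul_comm]; omega)
      · rintro ⟨r, q⟩ hx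
        simp only [Finset.mem_product, Finset.mem_Icc, Finset.mem_range] at hx
        simp only [Finset.mem_Icc]
        have h1 : (q + 1) * p ≤ M * p := Nat.mul_le_mul (by omega) (le_refl p)
        have h2 : (q + 1) * p = q * p + p := by ring
        omega
      · intro y hy
        dsimp only
        have hy2 := Finset.mem_Icc.mp hy
        have h1 := Nat.div_add_mod' (y - 1) p
        omega
      · rintro ⟨r, q⟩ hx
        simp only [Finset.mem_product, Finset.mem_Icc, Finset.mem_range] at hx
        dsimp only
        have h1 : q * p + r - 1 = (r - 1) + q * p := by omega
        have h2 : ((r - 1) + q * p) % p = (r - 1) % p := Nat.add_mul_mod_self_right (r - 1) q p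
        have h3 : ((r - 1) + q * p) / p = (r - 1) / p + q := Nat.add_mul_div_right _ _ hp.pos
        have h4 : (r - 1) % p = r - 1 := Nat.mod_eq_of_lt (by omega)
        have h5 : (r - 1) / p = 0 := Nat.div_eq_of_lt (by omega)
        rw [h1, h2, h3, h4, h5, Prod.mk.injEq]
        omega
      · intro y hy
        dsimp only
        have hy2 := Finset.mem_Icc.mp hy
        have h1 := Nat.div_add_mod' (y - 1) p
        congr 1
        omega
    rw [key]
    exact Finset.prod_product' (Finset.Icc 1 p) (Finset.range M) (fun r q => f (q * p + r))
  have hRe2 : ∀ f : ℕ → ZMod N, (∏ j ∈ Finset.Icc 1 (M * p), f j)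
      = ∏ r ∈ Finset.Icc 1 p, ∏ q ∈ Finset.range M, f (M * r - q) := by
    intro f
    have key : (∏ j ∈ Finset.Icc 1 (M * p), f j)
        = ∏ x ∈ Finset.Icc 1 p ×ˢ Finset.range M, f (M * x.1 - x.2) := by
      refine Finset.prod_nbij'
        (fun y => ((y - 1) / M + 1, M * ((y - 1) / M + 1) - y))
        (fun x => M * x.1 - x.2) ?_ ?_ ?_ ?_ ?_
      · intro y hy
        have hy2 := Finset.mem_Icc.mp hy
        simp only [Finset.mem_product, Finset.mem_Icc, Finset.mem_range]
        have h1 := Nat.div_add_mod (y - 1) M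
        have h2 : (y - 1) % M < M := Nat.mod_lt _ (by omega)
        have h3 : M * ((y - 1) / M + 1) = M * ((y - 1) / M) + M := by ring
        have h4 : (y - 1) / M < p := Nat.div_lt_of_lt_mul (by omega)
        exact ⟨⟨Nat.le_add_left 1 _, by omega⟩, by omega⟩
      · rintro ⟨r, q⟩ hx
        simp only [Finset.mem_product, Finset.mem_Icc, Finset.mem_range] at hx
        simp only [Finset.mem_Icc]
        have h1 : M * 1 ≤ M * r := Nat.mul_le_mul (le_refl M) (by omega)
        have h2 : M * r ≤ M * p := Nat.mul_le_mul (le_refl M) (by omega)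
        omega
      · intro y hy
        dsimp only
        have hy2 := Finset.mem_Icc.mp hy
        have h1 := Nat.div_add_mod (y - 1) M
        have h2 : (y - 1) % M < M := Nat.mod_lt _ (by omega)
        have h3 : M * ((y - 1) / M + 1) = M * ((y - 1) / M) + M := by ring
        omega
      · rintro ⟨r, q⟩ hx
        simp only [Finset.mem_product, Finset.mem_Icc, Finset.mem_range] at hx
        dsimp only
        have h0 : M * (r - 1) + M = M * r := by
          have h3 : r - 1 + 1 = r := by omega
          calc M * (r - 1) + M = M * ((r - 1) + 1) := (Nat.mul_succ M (r - 1)).symm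
            _ = M * r := by rw [h3]
        have h1 : M * r - q - 1 = M * (r - 1) + (M - 1 - q) := by omega
        have h2 : (M * (r - 1) + (M - 1 - q)) / M = (r - 1) + (M - 1 - q) / M :=
          Nat.mul_add_div (by omega : 0 < M) _ _
        have h4 : (M - 1 - q) / M = 0 := Nat.div_eq_of_lt (by omega)
        have h5 : (M * r - q - 1) / M = r - 1 := by rw [h1, h2, h4]; omega
        have h6 : M * (r - 1 + 1) = M * (r - 1) + M := Nat.mul_succ M (r - 1)
        rw [h5, Prod.mk.injEq]
        constructor
        · omega
        · rw [h6]
          omega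
      · intro y hy
        dsimp only
        have hy2 := Finset.mem_Icc.mp hy
        have h1 := Nat.div_add_mod (y - 1) M
        have h2 : (y - 1) % M < M := Nat.mod_lt _ (by omega)
        have h3 : M * ((y - 1) / M + 1) = M * ((y - 1) / M) + M := by ring
        congr 1
        omega
    rw [key]
    exact Finset.prod_product' (Finset.Icc 1 p) (Finset.range M) (fun r q => f (M * r - q))
  -- exponent congruence facts
  have hsplit : ∀ m j : ℕ, j ≤ m + 1 →
      Fe i j + (∑ a ∈ Finset.Icc j m, a ^ i) = Fe i (m + 1) := by
    intro m j hj
    simp only [Fe]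
    rw [← Finset.Ico_add_one_right_eq_Icc]
    exact Finset.sum_range_add_sum_Ico (fun a => a ^ i) hj
  have hFe1 : ((Fe i (M * p + 1) : ℕ) : ZMod p) = 0 := by
    rw [auxFeShift hp hip M 1]
    have : Fe i 1 = 0 := by
      simp only [Fe, Finset.sum_range_one]
      exact zero_pow (by omega : i ≠ 0)
    rw [this, Nat.cast_zero]
  have hFep : ((Fe i p : ℕ) : ZMod p) = 0 := by
    have h := auxFeShift hp hip 1 0
    rw [one_mul, add_zero] at h
    rw [h]
    simp [Fe]
  have hGh : ∀ r q : ℕ, 1 ≤ r → r ≤ p → q < M →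
      (((∑ a ∈ Finset.Icc (q * p + r) (M * p), a ^ i : ℕ)) : ZMod p)
      = ((∑ k ∈ Finset.Icc r (p - 1), k ^ i : ℕ) : ZMod p) := by
    intro r q hr1 hrp hq
    have hle : q * p + r ≤ M * p + 1 := by
      have h1 : (q + 1) * p ≤ M * p := Nat.mul_le_mul (by omega) (le_refl p)
      have h2 : (q + 1) * p = q * p + p := by ring
      omega
    have e1 := hsplit (M * p) (q * p + r) hle
    have e2 := hsplit (p - 1) r (by omega)
    rw [show p - 1 + 1 = p by omega] at e2
    have c1 := congrArg (fun t : ℕ => (t : ZMod p)) e1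
    have c2 := congrArg (fun t : ℕ => (t : ZMod p)) e2
    simp only [Nat.cast_add] at c1 c2
    rw [auxFeShift hp hip q r, hFe1] at c1
    rw [hFep] at c2
    linear_combination c1 - c2
  -- the cast identity  M*(q*p+r) ≡ M*r - q  mod N
  have hcast : ∀ r q : ℕ, 1 ≤ r → r ≤ p → q < M →
      ((M * r - q : ℕ) : ZMod N) = ((M : ℕ) : ZMod N) * ((q * p + r : ℕ) : ZMod N) := by
    intro r q hr1 hrp hq
    have h0 : M * (r - 1) + M = M * r := by
      have h3 : r - 1 + 1 = r := by omega
      calc M * (r - 1) + M = M * ((r - 1) + 1) := (Nat.mul_succ M (r - 1)).symm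
        _ = M * r := by rw [h3]
    have hkey : M * (q * p + r) = (M * r - q) + q * N := by
      have h5 : M * (q * p + r) = q * (M * p) + M * r := by ring
      rw [h5, hMp]
      have h7 : q * ((N - 1) + 1) = q * (N - 1) + q := Nat.mul_succ q (N - 1)
      have h8 : (N - 1) + 1 = N := by omega
      rw [h8] at h7
      omega
    have c := congrArg (fun t : ℕ => (t : ZMod N)) hkey
    push_cast at c
    rw [ZMod.natCast_self, mul_zero, add_zero] at c
    push_cast
    linear_combination -c
  -- LHS : R0 ^ M with uniform exponents
  have hLHS : R0 ^ M = ∏ r ∈ Finset.Icc 1 p, ∏ q ∈ Finset.range M,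
      (((q * p + r : ℕ) : ZMod N) ^ M) ^ (∑ k ∈ Finset.Icc r (p - 1), k ^ i) := by
    rw [hLflat,
      hRe1 (fun j => ((j : ZMod N) ^ M) ^ (∑ a ∈ Finset.Icc j (M * p), a ^ i))]
    refine Finset.prod_congr rfl fun r hr => Finset.prod_congr rfl fun q hq => ?_
    have hr2 := Finset.mem_Icc.mp hr
    have hq2 := Finset.mem_range.mp hq
    have hj1 : 1 ≤ q * p + r := by omega
    have hj2 : q * p + r ≤ M * p := by
      have h1 : (q + 1) * p ≤ M * p := Nat.mul_le_mul (by omega) (le_refl p)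
      have h2 : (q + 1) * p = q * p + p := by ring
      omega
    exact auxPowCongr (hχp' _ hj1 hj2) (hGh r q hr2.1 hr2.2 hq2)
  -- RHS : Snum ^ M in the same shape with an extra constant
  have hRHS : Snum p N i ^ M = ∏ r ∈ Finset.Icc 1 p, ∏ q ∈ Finset.range M,
      (((((M : ℕ) : ZMod N)) ^ M) ^ (∑ k ∈ Finset.Icc r (p - 1), k ^ i)
        * (((q * p + r : ℕ) : ZMod N) ^ M) ^ (∑ k ∈ Finset.Icc r (p - 1), k ^ i)) := by
    rw [hSflat,
      hRe2 (fun j => ∏ k ∈ Finset.filter (fun k => j ≤ M * k) (Finset.Icc 1 (p - 1)),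
        ((j : ZMod N) ^ M) ^ (k ^ i))]
    refine Finset.prod_congr rfl fun r hr => Finset.prod_congr rfl fun q hq => ?_
    have hr2 := Finset.mem_Icc.mp hr
    have hq2 := Finset.mem_range.mp hq
    have h0 : M * (r - 1) + M = M * r := by
      have h3 : r - 1 + 1 = r := by omega
      calc M * (r - 1) + M = M * ((r - 1) + 1) := (Nat.mul_succ M (r - 1)).symm
        _ = M * r := by rw [h3]
    have hfilter : Finset.filter (fun k => M * r - q ≤ M * k) (Finset.Icc 1 (p - 1))
        = Finset.Icc r (p - 1) := by
      ext k
      simp only [Finset.mem_filter, Finset.mem_Icc]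
      constructor
      · rintro ⟨⟨hk1, hk2⟩, hk3⟩
        refine ⟨?_, hk2⟩
        by_contra hcon
        have hkr : k ≤ r - 1 := by omega
        have h4 : M * k ≤ M * (r - 1) := Nat.mul_le_mul (le_refl M) hkr
        omega
      · rintro ⟨hk1, hk2⟩
        have h4 : M * r ≤ M * k := Nat.mul_le_mul (le_refl M) hk1
        exact ⟨⟨by omega, hk2⟩, by omega⟩
    rw [hfilter]
    have hc := hcast r q hr2.1 hr2.2 hq2
    calc ∏ k ∈ Finset.Icc r (p - 1), (((M * r - q : ℕ) : ZMod N) ^ M) ^ (k ^ i)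
        = ∏ k ∈ Finset.Icc r (p - 1),
            (((((M : ℕ) : ZMod N)) ^ M) ^ (k ^ i)
              * (((q * p + r : ℕ) : ZMod N) ^ M) ^ (k ^ i)) := by
          refine Finset.prod_congr rfl fun k _ => ?_
          rw [hc, mul_pow, mul_pow]
      _ = _ := by
          rw [Finset.prod_mul_distrib, Finset.prod_pow_eq_pow_sum, Finset.prod_pow_eq_pow_sum]
  -- Snum ^ M = (constant) * R0 ^ M
  have hRHS2 : Snum p N i ^ M
      = (∏ r ∈ Finset.Icc 1 p,
          (((((M : ℕ) : ZMod N)) ^ M) ^ (∑ k ∈ Finset.Icc r (p - 1), k ^ i)) ^ M)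
        * R0 ^ M := by
    rw [hRHS, hLHS]
    simp only [Finset.prod_mul_distrib]
    congr 1
    refine Finset.prod_congr rfl fun r _ => ?_
    rw [Finset.prod_const, Finset.card_range]
  -- the sum ∑_r h(r) is divisible by p
  have hsum0 : ((∑ r ∈ Finset.Icc 1 p, ∑ k ∈ Finset.Icc r (p - 1), k ^ i : ℕ) : ZMod p) = 0 := by
    have hswap : (∑ r ∈ Finset.Icc 1 p, ∑ k ∈ Finset.Icc r (p - 1), k ^ i)
        = ∑ k ∈ Finset.Icc 1 (p - 1), k * k ^ i := by
      have h1 : ∀ r ∈ Finset.Icc 1 p, ∑ k ∈ Finset.Icc r (p - 1), k ^ i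
          = ∑ k ∈ Finset.Icc 1 (p - 1), if r ≤ k then k ^ i else 0 := by
        intro r hr
        rw [← Finset.sum_filter]
        have hr2 := Finset.mem_Icc.mp hr
        congr 1
        ext k; simp only [Finset.mem_filter, Finset.mem_Icc]; omega
      rw [Finset.sum_congr rfl h1, Finset.sum_comm]
      refine Finset.sum_congr rfl fun k hk => ?_
      rw [← Finset.sum_filter]
      have hk2 := Finset.mem_Icc.mp hk
      have hf : Finset.filter (fun r => r ≤ k) (Finset.Icc 1 p) = Finset.Icc 1 k := by
        ext r; simp only [Finset.mem_filter, Finset.mem_Icc]; omega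
      rw [hf, Finset.sum_const, Nat.card_Icc, smul_eq_mul, Nat.add_sub_cancel]
    rw [hswap]
    push_cast
    have h2 : ∀ k ∈ Finset.Icc 1 (p - 1),
        ((k : ZMod p)) * (k : ZMod p) ^ i = (k : ZMod p) ^ (i + 1) := by
      intro k _; rw [pow_succ]; ring
    rw [Finset.sum_congr rfl h2]
    have h3 : ∑ k ∈ Finset.Icc 1 (p - 1), ((k : ZMod p)) ^ (i + 1)
        = ∑ k ∈ Finset.range p, ((k : ZMod p)) ^ (i + 1) := by
      have hIcc : Finset.Icc 1 (p - 1) = Finset.Ico 1 p := by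
        ext x; simp only [Finset.mem_Icc, Finset.mem_Ico]; omega
      rw [hIcc, Finset.range_eq_Ico,
        Finset.sum_eq_sum_Ico_succ_bot (by omega : 0 < p) (fun k => ((k : ZMod p)) ^ (i + 1))]
      rw [Nat.cast_zero, zero_pow (by omega : i + 1 ≠ 0), zero_add]
    rw [h3]
    exact auxSumPow hp (by omega)
  -- the constant is 1
  have hM0' : ((M : ℕ) : ZMod N) ≠ 0 := by
    apply hj0 M hM1
    have h1 : M * 1 ≤ M * p := Nat.mul_le_mul (le_refl M) (by omega)
    omega
  have hD : (∏ r ∈ Finset.Icc 1 p,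
      (((((M : ℕ) : ZMod N)) ^ M) ^ (∑ k ∈ Finset.Icc r (p - 1), k ^ i)) ^ M) = 1 := by
    have hcol : ∀ r ∈ Finset.Icc 1 p,
        (((((M : ℕ) : ZMod N)) ^ M) ^ (∑ k ∈ Finset.Icc r (p - 1), k ^ i)) ^ M
        = ((M : ℕ) : ZMod N) ^ (M * (∑ k ∈ Finset.Icc r (p - 1), k ^ i) * M) := by
      intro r _
      rw [← pow_mul, ← pow_mul]
      congr 1
      ring
    rw [Finset.prod_congr rfl hcol, Finset.prod_pow_eq_pow_sum]
    obtain ⟨t, ht⟩ : p ∣ ∑ r ∈ Finset.Icc 1 p, ∑ k ∈ Finset.Icc r (p - 1), k ^ i :=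
      (ZMod.natCast_eq_zero_iff _ _).mp hsum0
    have hE : (∑ r ∈ Finset.Icc 1 p, M * (∑ k ∈ Finset.Icc r (p - 1), k ^ i) * M)
        = (M * p) * (t * M) := by
      have : (∑ r ∈ Finset.Icc 1 p, M * (∑ k ∈ Finset.Icc r (p - 1), k ^ i) * M)
          = M * (∑ r ∈ Finset.Icc 1 p, ∑ k ∈ Finset.Icc r (p - 1), k ^ i) * M := by
        rw [Finset.mul_sum, Finset.sum_mul]
      rw [this, ht]; ring
    rw [hE, pow_mul, hMp, ZMod.pow_card_sub_one_eq_one hM0', one_pow]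
  -- conclude (Mnum * Snum) ^ M = 1
  have hfinal : (Mnum N i * Snum p N i) ^ M = 1 := by
    rw [mul_pow, hRHS2, hD, one_mul, ← mul_pow]
    exact hA
  -- extract a p-th root in the cyclic group of units
  have hx0 : Mnum N i * Snum p N i ≠ 0 := by
    intro h
    rw [h, zero_pow (by omega : M ≠ 0)] at hfinal
    exact zero_ne_one hfinal
  obtain ⟨g, hg⟩ := IsCyclic.exists_generator (α := (ZMod N)ˣ)
  have horder : orderOf g = M * p := by
    rw [orderOf_eq_card_of_forall_mem_zpowers hg, Nat.card_eq_fintype_card,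
      ZMod.card_units_eq_totient, Nat.totient_prime hN, ← hMp]
  set u : (ZMod N)ˣ := Units.mk0 (Mnum N i * Snum p N i) hx0 with hu
  have huM : u ^ M = 1 := by
    apply Units.ext
    rw [Units.val_pow_eq_pow_val, Units.val_one]
    exact hfinal
  obtain ⟨m, hm⟩ : ∃ m : ℕ, g ^ m = u := by
    have h := hg u
    rwa [← mem_powers_iff_mem_zpowers, Submonoid.mem_powers_iff] at h
  have hdvd : (M * p) ∣ m * M := by
    rw [← horder]
    apply orderOf_dvd_of_pow_eq_one
    rw [pow_mul, hm, huM]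
  have hpm : p ∣ m := by
    rcases hdvd with ⟨c, hc⟩
    have h1 : m * M = (p * c) * M := by rw [hc]; ring
    exact ⟨c, Nat.eq_of_mul_eq_mul_right (by omega : 0 < M) h1⟩
  obtain ⟨c, hc⟩ := hpm
  refine ⟨((g ^ c : (ZMod N)ˣ) : ZMod N), ?_⟩
  have hgc : (g ^ c) ^ p = u := by rw [← pow_mul, mul_comm, ← hc, hm]
  calc ((g ^ c : (ZMod N)ˣ) : ZMod N) ^ p
      = (((g ^ c) ^ p : (ZMod N)ˣ) : ZMod N) := by simp [Units.val_pow_eq_pow_val]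
    _ = (u : ZMod N) := by rw [hgc]
    _ = Mnum N i * Snum p N i := rfl
end

section
/- Let p and N be primes with p odd and N ≡ 1 (mod p), and let m be an integer with 0 < m < p−1. Then in the group 𝔽_N^× one has A_m = y^p · ∏_{j=1}^{m−1} S_j^{(−1)^j · C(m,j)} for some y ∈ 𝔽_N^×, where C(m,j) denotes the binomial coefficient; that is, A_m ≡ ∏_{j=1}^{m−1} S_j^{(−1)^j C(m,j)} modulo p-th powers in 𝔽_N^×. -/
open scoped TensorProduct

open Finset


private lemma fact_prod_aux (a : ℕ) : ∀ b : ℕ,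
    a.factorial * ∏ s ∈ range b, (a + s + 1) = (a + b).factorial := by
  intro b
  induction b with
  | zero => simp
  | succ t ih =>
      rw [prod_range_succ, ← mul_assoc, ih]
      rw [show a + (t+1) = (a + t) + 1 from by ring, Nat.factorial_succ]
      ring

private lemma prod_Icc_one {Mo : Type*} [CommMonoid Mo] (n : ℕ) (f : ℕ → Mo) :
    ∏ k ∈ Icc 1 n, f k = ∏ i ∈ range n, f (i + 1) := by
  rw [← Finset.Ico_add_one_right_eq_Icc, Finset.prod_Ico_eq_prod_range]
  simp [add_comm]

private lemma sum_Icc_one {Mo : Type*} [AddCommMonoid Mo] (n : ℕ) (f : ℕ → Mo) :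
    ∑ k ∈ Icc 1 n, f k = ∑ i ∈ range n, f (i + 1) := by
  rw [← Finset.Ico_add_one_right_eq_Icc, Finset.sum_Ico_eq_sum_range]
  simp [add_comm]

private lemma prod_range_mul' {Mo : Type*} [CommMonoid Mo] (f : ℕ → Mo) (M p : ℕ) :
    ∏ i ∈ range (M * p), f i = ∏ s ∈ range M, ∏ w ∈ range p, f (s * p + w) := by
  induction M with
  | zero => simp
  | succ n ih => rw [Nat.succ_mul, Finset.prod_range_add, ih, Finset.prod_range_succ]

private lemma zpow_sum' {G₀ : Type*} [CommGroupWithZero G₀] {x : G₀} (hx : x ≠ 0)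
    {ι : Type*} (s : Finset ι) (f : ι → ℤ) :
    x ^ (∑ i ∈ s, f i) = ∏ i ∈ s, x ^ f i := by
  classical
  induction s using Finset.induction with
  | empty => simp
  | insert _ _ h ih => rw [Finset.sum_insert h, Finset.prod_insert h, zpow_add₀ hx, ih]

private lemma prod_range_eq_Icc_lo {Mo : Type*} [CommMonoid Mo] (f : ℕ → Mo) (n : ℕ)
    (hn : 0 < n) : ∏ u ∈ range n, f u = f 0 * ∏ k ∈ Icc 1 (n-1), f k := by
  cases n with
  | zero => omega
  | succ t =>
      rw [Finset.prod_range_succ', prod_Icc_one]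
      simp [mul_comm]

private lemma prod_range_eq_Icc_hi {Mo : Type*} [CommMonoid Mo] (f : ℕ → Mo) (n : ℕ)
    (hn : 0 < n) : ∏ u ∈ range n, f u = (∏ k ∈ Icc 1 (n-1), f (k-1)) * f (n-1) := by
  cases n with
  | zero => omega
  | succ t =>
      rw [Finset.prod_range_succ, prod_Icc_one]
      simp

private lemma fact_mul_fact (N : ℕ) [hNp : Fact N.Prime] :
    ∀ a : ℕ, a ≤ N - 1 →
      ((a.factorial : ZMod N) * ((N - 1 - a).factorial : ZMod N)) = (-1) ^ (a + 1) := by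
  have hN2 := hNp.out.two_le
  intro a
  induction a with
  | zero => simpa using ZMod.wilsons_lemma N
  | succ t ih =>
      intro ht
      have ih' := ih (by omega)
      have h1 : N - 1 - t = (N - 1 - (t+1)) + 1 := by omega
      rw [h1, Nat.factorial_succ] at ih'
      have hc : ((N - 1 - (t+1) + 1 : ℕ) : ZMod N) = -((t:ZMod N) + 1) := by
        have he : (N - 1 - (t+1) + 1) + (t + 1) = N := by omega
        have := congrArg (fun x : ℕ => (x : ZMod N)) he
        push_cast at this
        rw [ZMod.natCast_self] at this
        push_cast
        linear_combination this
      push_cast [hc] at ih'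
      rw [Nat.factorial_succ]
      push_cast
      rw [pow_succ]
      linear_combination (-1 : ZMod N) * ih'

/-- For primes `p` odd and `N ≡ 1 (mod p)` and `0 < m < p - 1`, one has
`A_m = y^p · ∏_{j=1}^{m-1} S_j^{(-1)^j C(m,j)}` in `𝔽_N^×` for some `y ∈ 𝔽_N^×`. -/
theorem statement11 (p N : ℕ) (hp : p.Prime) (hpodd : Odd p)
    [hNp : Fact N.Prime] (hNmod : N % p = 1)
    (m : ℕ) (hm0 : 0 < m) (hm1 : m < p - 1) :
    ∃ y : ZMod N, y ≠ 0 ∧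
      Anum N m = y ^ p *
        ∏ j ∈ Finset.Icc 1 (m - 1), Snum p N j ^ ((-1 : ℤ) ^ j * (m.choose j)) := by
  classical
  obtain ⟨m', rfl⟩ : ∃ m', m = m' + 1 := ⟨m - 1, by omega⟩
  simp only [Nat.add_sub_cancel]
  have hN : N.Prime := hNp.out
  haveI : Fact p.Prime := ⟨hp⟩
  have hN2 : 2 ≤ N := hN.two_le
  have hp3 : 3 ≤ p := by
    rcases hpodd with ⟨t, ht⟩
    have := hp.two_le; omega
  set M : ℕ := (N - 1) / p with hMdef
  have hdm := Nat.div_add_mod N p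
  rw [hNmod] at hdm
  have hdvd : p ∣ N - 1 := ⟨N / p, by omega⟩
  have hpM : p * M = N - 1 := Nat.mul_div_cancel' hdvd
  have hN1 : N - 1 = M * p := by rw [← hpM]; ring
  have hNne2 : N ≠ 2 := by
    rintro rfl
    rw [Nat.mod_eq_of_lt (by omega)] at hNmod
    omega
  have hNodd : Odd N := hN.odd_of_ne_two hNne2
  have hMeven : Even M := by
    have h1 : Even (p * M) := by
      rw [hpM]; rcases hNodd with ⟨t, ht⟩; exact ⟨t, by omega⟩
    rcases Nat.even_mul.mp h1 with h | h
    · exact absurd h (by simp [Nat.even_iff, Nat.odd_iff.mp hpodd])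
    · exact h
  have hpltN : p < N := by
    have : p ≤ N - 1 := Nat.le_of_dvd (by omega) hdvd
    omega
  have hne : ∀ k : ℕ, 1 ≤ k → k ≤ N - 1 → ((k : ℕ) : ZMod N) ≠ 0 := by
    intro k h1 h2 h0
    rw [ZMod.natCast_eq_zero_iff] at h0
    have := Nat.le_of_dvd (by omega) h0
    omega
  set F : ℕ → ZMod N := fun k => ((M * k).factorial : ZMod N) with hFdef
  have hFne : ∀ k : ℕ, k ≤ p → F k ≠ 0 := by
    intro k hk h0
    simp only [hFdef, ZMod.natCast_eq_zero_iff] at h0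
    rw [hN.dvd_factorial] at h0
    have : M * k ≤ M * p := Nat.mul_le_mul_left M hk
    omega
  set E : ℕ → ℕ := fun u => (p - u) ^ (m' + 1) % p with hEdef
  set B : ℕ → ZMod N := fun u => ∏ s ∈ Finset.range M, ((M * u + s + 1 : ℕ) : ZMod N)
    with hBdef
  have hE0 : E 0 = 0 := by
    simp only [hEdef, Nat.sub_zero]
    have : p ∣ p ^ (m' + 1) := dvd_pow_self p (Nat.succ_ne_zero m')
    omega
  have hEp1 : E (p - 1) = 1 := by
    simp only [hEdef]
    rw [show p - (p - 1) = 1 from by omega, one_pow]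
    exact Nat.mod_eq_of_lt (by omega)
  have hminus : ((N - 1 : ℕ) : ZMod N) = -1 := by
    have h1 : ((N - 1 + 1 : ℕ) : ZMod N) = 0 := by
      rw [show N - 1 + 1 = N from by omega, ZMod.natCast_self]
    push_cast at h1
    linear_combination h1
  have hpm : (p : ZMod N) * (M : ZMod N) = -1 := by
    have h1 : ((p * M : ℕ) : ZMod N) = ((N - 1 : ℕ) : ZMod N) := by rw [hpM]
    rw [hminus] at h1
    push_cast at h1
    exact h1
  have hkey : ∀ u < p, ∀ s < M, ((s * p + (p - 1 - u) + 1 : ℕ) : ZMod N)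
      = (p : ZMod N) * ((M * u + s + 1 : ℕ) : ZMod N) := by
    intro u hu s hs
    have h1 : (s * p + (p - 1 - u) + 1) + u = s * p + p := by omega
    have h2 := congrArg (fun x : ℕ => (x : ZMod N)) h1
    push_cast at h2
    push_cast
    linear_combination h2 - (u : ZMod N) * hpm
  have hexp : ∀ u < p, ∀ s : ℕ, (s * p + (p - 1 - u) + 1) ^ (m' + 1) % p = E u := by
    intro u hu s
    have hmod : (s * p + (p - 1 - u) + 1) % p = (p - u) % p := by
      rw [show s * p + (p - 1 - u) + 1 = (p - u) + s * p from by omega,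
        Nat.add_mul_mod_self_right]
    simp only [hEdef]
    rw [Nat.pow_mod, hmod, ← Nat.pow_mod]
  -- Step A : A' in terms of blocks
  have hA' : ∏ c ∈ Finset.Icc 1 (N - 1), (c : ZMod N) ^ (c ^ (m' + 1) % p)
      = (p : ZMod N) ^ (M * ∑ u ∈ Finset.range p, E u)
        * ∏ u ∈ Finset.range p, B u ^ E u := by
    calc ∏ c ∈ Finset.Icc 1 (N - 1), (c : ZMod N) ^ (c ^ (m' + 1) % p)
        = ∏ i ∈ Finset.range (M * p), ((i + 1 : ℕ) : ZMod N) ^ ((i + 1) ^ (m' + 1) % p) := by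
          rw [prod_Icc_one, hN1]
      _ = ∏ s ∈ Finset.range M, ∏ w ∈ Finset.range p,
            ((s * p + w + 1 : ℕ) : ZMod N) ^ ((s * p + w + 1) ^ (m' + 1) % p) :=
          prod_range_mul' _ M p
      _ = ∏ w ∈ Finset.range p, ∏ s ∈ Finset.range M,
            ((s * p + w + 1 : ℕ) : ZMod N) ^ ((s * p + w + 1) ^ (m' + 1) % p) :=
          Finset.prod_comm
      _ = ∏ u ∈ Finset.range p, ∏ s ∈ Finset.range M,
            ((s * p + (p - 1 - u) + 1 : ℕ) : ZMod N)
              ^ ((s * p + (p - 1 - u) + 1) ^ (m' + 1) % p) :=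
          (Finset.prod_range_reflect (fun w => ∏ s ∈ Finset.range M,
            ((s * p + w + 1 : ℕ) : ZMod N) ^ ((s * p + w + 1) ^ (m' + 1) % p)) p).symm
      _ = ∏ u ∈ Finset.range p, ((p : ZMod N) ^ (M * E u) * B u ^ E u) := by
          refine Finset.prod_congr rfl fun u hu => ?_
          rw [Finset.mem_range] at hu
          calc ∏ s ∈ Finset.range M,
                ((s * p + (p - 1 - u) + 1 : ℕ) : ZMod N)
                  ^ ((s * p + (p - 1 - u) + 1) ^ (m' + 1) % p)
              = ∏ s ∈ Finset.range M,
                  ((p : ZMod N) * ((M * u + s + 1 : ℕ) : ZMod N)) ^ E u := by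
                refine Finset.prod_congr rfl fun s hs => ?_
                rw [Finset.mem_range] at hs
                rw [hexp u hu s, hkey u hu s hs]
            _ = (p : ZMod N) ^ (M * E u) * B u ^ E u := by
                simp only [hBdef, mul_pow]
                rw [Finset.prod_mul_distrib, Finset.prod_const, Finset.card_range,
                  ← pow_mul, Finset.prod_pow, mul_comm (E u) M]
      _ = (p : ZMod N) ^ (M * ∑ u ∈ Finset.range p, E u)
            * ∏ u ∈ Finset.range p, B u ^ E u := by
          rw [Finset.prod_mul_distrib, Finset.prod_pow_eq_pow_sum, ← Finset.mul_sum]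
  have hB_F : ∀ u : ℕ, F u * B u = F (u + 1) := by
    intro u
    simp only [hFdef, hBdef]
    rw [← Nat.cast_prod, ← Nat.cast_mul, fact_prod_aux]
    rw [show M * u + M = M * (u + 1) from by ring]
  have hp1 : 0 < p := by omega
  have htel : (∏ u ∈ Finset.range p, B u ^ E u) * ∏ k ∈ Finset.Icc 1 (p - 1), F k ^ E k
      = (-1) * ∏ k ∈ Finset.Icc 1 (p - 1), F k ^ E (k - 1) := by
    have h1 : ∏ u ∈ Finset.range p, F u ^ E u
        = ∏ k ∈ Finset.Icc 1 (p - 1), F k ^ E k := by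
      rw [prod_range_eq_Icc_lo (fun u => F u ^ E u) p hp1, hE0]
      simp
    have h2 : ∏ u ∈ Finset.range p, F (u + 1) ^ E u
        = (∏ k ∈ Finset.Icc 1 (p - 1), F k ^ E (k - 1)) * (-1) := by
      rw [prod_range_eq_Icc_hi (fun u => F (u + 1) ^ E u) p hp1]
      congr 1
      · refine Finset.prod_congr rfl fun k hk => ?_
        rw [Finset.mem_Icc] at hk
        rw [show k - 1 + 1 = k from by omega]
      · rw [show p - 1 + 1 = p from by omega, hEp1, pow_one]
        simp only [hFdef]
        rw [show M * p = N - 1 from by omega]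
        exact ZMod.wilsons_lemma N
    calc (∏ u ∈ Finset.range p, B u ^ E u) * ∏ k ∈ Finset.Icc 1 (p - 1), F k ^ E k
        = ∏ u ∈ Finset.range p, (F u * B u) ^ E u := by
          rw [← h1, ← Finset.prod_mul_distrib]
          exact Finset.prod_congr rfl fun u _ => by rw [mul_pow]; ring
      _ = ∏ u ∈ Finset.range p, F (u + 1) ^ E u :=
          Finset.prod_congr rfl fun u _ => by rw [hB_F u]
      _ = (-1) * ∏ k ∈ Finset.Icc 1 (p - 1), F k ^ E (k - 1) := by rw [h2]; ring
  have hX : ∏ u ∈ Finset.range p, B u ^ E u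
      = (-1) * ∏ k ∈ Finset.Icc 1 (p - 1), F k ^ ((E (k - 1) : ℤ) - (E k : ℤ)) := by
    have hCne : (∏ k ∈ Finset.Icc 1 (p - 1), F k ^ E k) ≠ 0 :=
      Finset.prod_ne_zero_iff.mpr fun k hk =>
        pow_ne_zero _ (hFne k (by rw [Finset.mem_Icc] at hk; omega))
    have hsplit : ∏ k ∈ Finset.Icc 1 (p - 1), F k ^ ((E (k - 1) : ℤ) - (E k : ℤ))
        = (∏ k ∈ Finset.Icc 1 (p - 1), F k ^ E (k - 1))
          / (∏ k ∈ Finset.Icc 1 (p - 1), F k ^ E k) := by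
      rw [← Finset.prod_div_distrib]
      refine Finset.prod_congr rfl fun k hk => ?_
      rw [Finset.mem_Icc] at hk
      rw [← zpow_natCast (F k) (E (k - 1)), ← zpow_natCast (F k) (E k),
        ← zpow_sub₀ (hFne k (by omega))]
    rw [hsplit, ← mul_div_assoc, eq_div_iff hCne]
    exact htel
  -- the binomial coefficient sum
  set c : ℕ → ℤ := fun k =>
    ∑ j ∈ Finset.Icc 1 m', (-1 : ℤ) ^ j * ((m' + 1).choose j) * (k : ℤ) ^ j with hcdef
  have hbinom : ∀ x : ℤ, (-x + 1) ^ (m' + 1) - (-x) ^ (m' + 1)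
      = 1 + ∑ j ∈ Finset.Icc 1 m', (-1 : ℤ) ^ j * ((m' + 1).choose j) * x ^ j := by
    intro x
    have h := add_pow (-x) 1 (m' + 1)
    rw [Finset.sum_range_succ, Finset.sum_range_succ'] at h
    simp only [Nat.choose_self, Nat.choose_zero_right, one_pow, pow_zero, Nat.cast_one,
      mul_one, one_mul] at h
    rw [sum_Icc_one]
    have hsum : ∑ j ∈ Finset.range m', (-x) ^ (j + 1) * (((m' + 1).choose (j + 1) : ℤ))
        = ∑ j ∈ Finset.range m',
            (-1 : ℤ) ^ (j + 1) * ((m' + 1).choose (j + 1)) * x ^ (j + 1) :=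
      Finset.sum_congr rfl fun j _ => by rw [neg_pow]; ring
    rw [← hsum]
    linear_combination h
  have hEcong : ∀ k : ℕ, 1 ≤ k → k ≤ p - 1 →
      ((p : ℤ)) ∣ ((E (k - 1) : ℤ) - (E k : ℤ) - (1 + c k)) := by
    intro k h1 h2
    have hcast1 : ((p - (k - 1) : ℕ) : ℤ) ≡ -(k : ℤ) + 1 [ZMOD (p : ℤ)] := by
      have hx : ((p - (k - 1) : ℕ) : ℤ) = (p : ℤ) + 1 - (k : ℤ) := by omega
      rw [hx]
      exact Int.ModEq.symm (Int.modEq_iff_dvd.mpr ⟨1, by ring⟩)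
    have hcast2 : ((p - k : ℕ) : ℤ) ≡ -(k : ℤ) [ZMOD (p : ℤ)] := by
      have hx : ((p - k : ℕ) : ℤ) = (p : ℤ) - (k : ℤ) := by omega
      rw [hx]
      exact Int.ModEq.symm (Int.modEq_iff_dvd.mpr ⟨1, by ring⟩)
    have e1 : (E (k - 1) : ℤ) ≡ (-(k : ℤ) + 1) ^ (m' + 1) [ZMOD (p : ℤ)] := by
      simp only [hEdef]
      calc (((p - (k - 1)) ^ (m' + 1) % p : ℕ) : ℤ)
          = ((p - (k - 1) : ℕ) : ℤ) ^ (m' + 1) % (p : ℤ) := by push_cast; rfl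
        _ ≡ ((p - (k - 1) : ℕ) : ℤ) ^ (m' + 1) [ZMOD (p : ℤ)] :=
            Int.emod_emod_of_dvd _ dvd_rfl
        _ ≡ (-(k : ℤ) + 1) ^ (m' + 1) [ZMOD (p : ℤ)] := hcast1.pow _
    have e2 : (E k : ℤ) ≡ (-(k : ℤ)) ^ (m' + 1) [ZMOD (p : ℤ)] := by
      simp only [hEdef]
      calc (((p - k) ^ (m' + 1) % p : ℕ) : ℤ)
          = ((p - k : ℕ) : ℤ) ^ (m' + 1) % (p : ℤ) := by push_cast; rfl
        _ ≡ ((p - k : ℕ) : ℤ) ^ (m' + 1) [ZMOD (p : ℤ)] :=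
            Int.emod_emod_of_dvd _ dvd_rfl
        _ ≡ (-(k : ℤ)) ^ (m' + 1) [ZMOD (p : ℤ)] := hcast2.pow _
    have e3 := e1.sub e2
    rw [hbinom (k : ℤ)] at e3
    simp only [hcdef]
    exact e3.symm.dvd
  set Y3 : ZMod N := ∏ k ∈ Finset.Icc 1 (p - 1),
    F k ^ (((E (k - 1) : ℤ) - (E k : ℤ) - (1 + c k)) / (p : ℤ)) with hY3def
  set S0 : ZMod N := ∏ k ∈ Finset.Icc 1 (p - 1), F k with hS0def
  have hD : ∏ k ∈ Finset.Icc 1 (p - 1), F k ^ ((E (k - 1) : ℤ) - (E k : ℤ))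
      = Y3 ^ p * (S0 * ∏ k ∈ Finset.Icc 1 (p - 1), F k ^ (c k)) := by
    rw [hY3def, hS0def, ← Finset.prod_pow, ← Finset.prod_mul_distrib,
      ← Finset.prod_mul_distrib]
    refine Finset.prod_congr rfl fun k hk => ?_
    rw [Finset.mem_Icc] at hk
    have hFk : F k ≠ 0 := hFne k (by omega)
    have hq := Int.mul_ediv_cancel' (hEcong k hk.1 hk.2)
    calc F k ^ ((E (k - 1) : ℤ) - (E k : ℤ))
        = F k ^ ((((E (k - 1) : ℤ) - (E k : ℤ) - (1 + c k)) / (p : ℤ)) * (p : ℤ)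
            + (1 + c k)) := by
          congr 1
          rw [mul_comm]
          linarith
      _ = (F k ^ (((E (k - 1) : ℤ) - (E k : ℤ) - (1 + c k)) / (p : ℤ))) ^ p
            * (F k * F k ^ (c k)) := by
          rw [zpow_add₀ hFk, zpow_mul, zpow_natCast, zpow_add₀ hFk, zpow_one]
  have hswap : ∏ k ∈ Finset.Icc 1 (p - 1), F k ^ (c k)
      = ∏ j ∈ Finset.Icc 1 m', Snum p N j ^ ((-1 : ℤ) ^ j * ((m' + 1).choose j)) := by
    calc ∏ k ∈ Finset.Icc 1 (p - 1), F k ^ (c k)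
        = ∏ k ∈ Finset.Icc 1 (p - 1), ∏ j ∈ Finset.Icc 1 m',
            (F k ^ ((k : ℤ) ^ j)) ^ ((-1 : ℤ) ^ j * ((m' + 1).choose j)) := by
          refine Finset.prod_congr rfl fun k hk => ?_
          rw [Finset.mem_Icc] at hk
          simp only [hcdef]
          rw [zpow_sum' (hFne k (by omega))]
          refine Finset.prod_congr rfl fun j hj => ?_
          rw [← zpow_mul]
          congr 1
          ring
      _ = ∏ j ∈ Finset.Icc 1 m', (∏ k ∈ Finset.Icc 1 (p - 1),
            F k ^ ((k : ℤ) ^ j)) ^ ((-1 : ℤ) ^ j * ((m' + 1).choose j)) := by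
          rw [Finset.prod_comm]
          exact Finset.prod_congr rfl fun j _ => (Finset.prod_zpow _ _ _)
      _ = ∏ j ∈ Finset.Icc 1 m', Snum p N j ^ ((-1 : ℤ) ^ j * ((m' + 1).choose j)) := by
          refine Finset.prod_congr rfl fun j _ => ?_
          congr 1
          simp only [Snum, ← hMdef, hFdef]
          refine Finset.prod_congr rfl fun k _ => ?_
          rw [← zpow_natCast (((M * k).factorial : ZMod N)) (k ^ j)]
          congr 1
  -- S0 = ±1
  have h2refl : ∏ i ∈ Finset.range (p - 1), F (p - 1 - i)
      = ∏ i ∈ Finset.range (p - 1), F (i + 1) := by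
    rw [← Finset.prod_range_reflect (fun i => F (i + 1)) (p - 1)]
    refine Finset.prod_congr rfl fun i hi => ?_
    rw [Finset.mem_range] at hi
    congr 1
    omega
  have hS0sq : S0 * S0 = 1 := by
    have e : S0 = ∏ i ∈ Finset.range (p - 1), F (i + 1) := by
      rw [hS0def, prod_Icc_one]
    calc S0 * S0 = ∏ i ∈ Finset.range (p - 1), (F (i + 1) * F (p - 1 - i)) := by
          rw [Finset.prod_mul_distrib, h2refl, ← e]
      _ = ∏ i ∈ Finset.range (p - 1), (-1 : ZMod N) := by
          refine Finset.prod_congr rfl fun i hi => ?_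
          rw [Finset.mem_range] at hi
          have hle : M * (i + 1) + M * (p - 1 - i) = N - 1 := by
            have h3 : (i + 1) + (p - 1 - i) = p := by omega
            calc M * (i + 1) + M * (p - 1 - i) = M * ((i + 1) + (p - 1 - i)) := by ring
              _ = M * p := by rw [h3]
              _ = N - 1 := by omega
          have hsub : M * (p - 1 - i) = (N - 1) - M * (i + 1) := by omega
          have hb : M * (i + 1) ≤ N - 1 := by omega
          have hff := fact_mul_fact N (M * (i + 1)) hb
          rw [← hsub] at hff
          simp only [hFdef]
          rw [hff, pow_succ, Even.neg_one_pow (hMeven.mul_right (i + 1))]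
          ring
      _ = 1 := by
          rw [Finset.prod_const, Finset.card_range]
          exact Even.neg_one_pow (by rcases hpodd with ⟨t, ht⟩; exact ⟨t, by omega⟩)
  have hS0cases := mul_self_eq_one_iff.mp hS0sq
  have hS0p : S0 ^ p = S0 := by
    rcases hS0cases with h | h <;> rw [h]
    · rw [one_pow]
    · rw [hpodd.neg_one_pow]
  have hS0ne : S0 ≠ 0 := by
    rcases hS0cases with h | h <;> rw [h] <;> simp
  -- divisibility of the exponent sum
  have hdvdE : p ∣ ∑ u ∈ Finset.range p, E u := by
    haveI : NeZero p := ⟨by omega⟩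
    rw [← ZMod.natCast_eq_zero_iff]
    push_cast
    have h1 : ∀ u ∈ Finset.range p, ((E u : ℕ) : ZMod p) = (-(u : ZMod p)) ^ (m' + 1) := by
      intro u hu
      rw [Finset.mem_range] at hu
      simp only [hEdef]
      rw [ZMod.natCast_mod]
      push_cast
      congr 1
      rw [Nat.cast_sub (le_of_lt hu), ZMod.natCast_self, zero_sub]
    rw [Finset.sum_congr rfl h1]
    have h2 : ∑ u ∈ Finset.range p, (-(u : ZMod p)) ^ (m' + 1)
        = (-1) ^ (m' + 1) * ∑ u ∈ Finset.range p, ((u : ZMod p)) ^ (m' + 1) := by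
      rw [Finset.mul_sum]
      exact Finset.sum_congr rfl fun u _ => by rw [neg_pow]
    rw [h2]
    have h3 : ∑ u ∈ Finset.range p, ((u : ZMod p)) ^ (m' + 1)
        = ∑ x : ZMod p, x ^ (m' + 1) := by
      refine Finset.sum_nbij' (fun u => (u : ZMod p)) (fun x => x.val) ?_ ?_ ?_ ?_ ?_
      · intro a ha; exact Finset.mem_univ _
      · intro a ha; rw [Finset.mem_range]; exact ZMod.val_lt a
      · intro a ha; rw [Finset.mem_range] at ha
        simp [ZMod.val_cast_of_lt ha]
      · intro a ha; simp [ZMod.natCast_val]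
      · intro a ha; rfl
    rw [h3, FiniteField.sum_pow_lt_card_sub_one (ZMod p) (m' + 1)
      (by rw [ZMod.card]; omega)]
    ring
  obtain ⟨t, ht⟩ := hdvdE
  -- step 1
  set Y1 : ZMod N := ∏ cc ∈ Finset.Icc 1 (N - 1), (cc : ZMod N) ^ (cc ^ (m' + 1) / p)
    with hY1def
  have hY1ne : Y1 ≠ 0 := by
    rw [hY1def]
    refine Finset.prod_ne_zero_iff.mpr fun k hk => ?_
    rw [Finset.mem_Icc] at hk
    exact pow_ne_zero _ (hne k hk.1 hk.2)
  have hstep1 : Anum N (m' + 1)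
      = Y1 ^ p * ∏ cc ∈ Finset.Icc 1 (N - 1), (cc : ZMod N) ^ (cc ^ (m' + 1) % p) := by
    simp only [Anum]
    rw [hY1def, ← Finset.prod_pow, ← Finset.prod_mul_distrib]
    refine Finset.prod_congr rfl fun k hk => ?_
    rw [← pow_mul, ← pow_add]
    congr 1
    exact (Nat.div_add_mod' _ _).symm
  have hY3ne : Y3 ≠ 0 := by
    rw [hY3def]
    refine Finset.prod_ne_zero_iff.mpr fun k hk => ?_
    rw [Finset.mem_Icc] at hk
    exact zpow_ne_zero _ (hFne k (by omega))
  have hpcne : ((p : ℕ) : ZMod N) ≠ 0 := hne p (by omega) (by omega)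
  refine ⟨Y1 * ((p : ℕ) : ZMod N) ^ (M * t) * (-1) * Y3 * S0, ?_, ?_⟩
  · exact mul_ne_zero (mul_ne_zero (mul_ne_zero (mul_ne_zero hY1ne
      (pow_ne_zero _ hpcne)) (neg_ne_zero.mpr one_ne_zero)) hY3ne) hS0ne
  · have key : Anum N (m' + 1)
        = Y1 ^ p * ((p : ZMod N) ^ (M * (p * t))
          * ((-1) * (Y3 ^ p * (S0 * ∏ j ∈ Finset.Icc 1 m',
              Snum p N j ^ ((-1 : ℤ) ^ j * ((m' + 1).choose j)))))) := by
      rw [hstep1, hA', hX, hD, hswap, ht]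
    rw [key]
    have expand : (Y1 * ((p : ℕ) : ZMod N) ^ (M * t) * (-1) * Y3 * S0) ^ p
        = Y1 ^ p * (((p : ℕ) : ZMod N) ^ (M * t)) ^ p * (-1 : ZMod N) ^ p
          * Y3 ^ p * S0 ^ p := by
      ring
    rw [expand, hS0p, hpodd.neg_one_pow,
      show (((p : ℕ) : ZMod N) ^ (M * t)) ^ p = ((p : ℕ) : ZMod N) ^ (M * (p * t)) from by
        rw [← pow_mul, show M * t * p = M * (p * t) from by ring]]
    ring
end

section
/- Let p and N be primes with p odd and N ≡ 1 (mod p), and let i be an even nonnegative integer. Then S_i is a p-th power in 𝔽_N^×. -/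
open scoped TensorProduct

lemma fact_reflect (N : ℕ) [Fact N.Prime] :
    ∀ m, m ≤ N - 1 →
      ((Nat.factorial (N - 1 - m) : ZMod N)) * (Nat.factorial m : ZMod N)
        = (-1) ^ (m + 1) := by
  have hN2 : 2 ≤ N := (Fact.out : N.Prime).two_le
  have key : ∀ m, m ≤ N - 1 →
      ((Nat.factorial (N - 1 - m) : ZMod N)) * (Nat.factorial m : ZMod N) * (-1) ^ m
        = (Nat.factorial (N - 1) : ZMod N) := by
    intro m hm
    induction m with
    | zero => simp
    | succ m ih =>
      have hm' : m ≤ N - 1 := Nat.le_of_succ_le hm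
      have key := ih hm'
      have h1 : N - 1 - m = (N - 1 - (m + 1)) + 1 := by omega
      rw [h1, Nat.factorial_succ, Nat.cast_mul] at key
      have hcast : (((N - 1 - (m + 1)) + 1 : ℕ) : ZMod N) = -((m + 1 : ℕ) : ZMod N) := by
        have h2 : (N - 1 - (m + 1)) + 1 = N - (m + 1) := by omega
        rw [h2, Nat.cast_sub (by omega), ZMod.natCast_self, zero_sub]
      rw [hcast] at key
      rw [Nat.factorial_succ, Nat.cast_mul]
      push_cast at key ⊢
      ring_nf at key ⊢
      linear_combination key
  intro m hm
  have := key m hm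
  rw [ZMod.wilsons_lemma] at this
  have h2 : ((-1 : ZMod N)) ^ m * (-1) ^ m = 1 := by
    rw [← mul_pow]; simp
  calc ((Nat.factorial (N - 1 - m) : ZMod N)) * (Nat.factorial m : ZMod N)
      = ((Nat.factorial (N - 1 - m) : ZMod N)) * (Nat.factorial m : ZMod N) * ((-1) ^ m * (-1) ^ m) := by rw [h2, mul_one]
    _ = (((Nat.factorial (N - 1 - m) : ZMod N)) * (Nat.factorial m : ZMod N) * (-1) ^ m) * (-1) ^ m := by ring
    _ = (-1) * (-1) ^ m := by rw [this]
    _ = (-1) ^ (m + 1) := by rw [pow_succ]; ring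

/-- For primes `p` odd and `N ≡ 1 (mod p)` and even `i ≥ 0`, the quantity `S_i` is a
`p`-th power in `𝔽_N^×`. -/
theorem statement12 (p N : ℕ) (hp : p.Prime) (hpodd : Odd p)
    (hN : N.Prime) (hNmod : N % p = 1)
    (i : ℕ) (hi : Even i) :
    IsPthPow p (Snum p N i) := by
  haveI : Fact N.Prime := ⟨hN⟩
  haveI : Fact p.Prime := ⟨hp⟩
  obtain ⟨j, hj⟩ := hpodd
  have hp2 : 2 ≤ p := hp.two_le
  have hN2 : 2 ≤ N := hN.two_le
  have hdvdN : p ∣ N - 1 := ⟨N / p, by have := Nat.mod_add_div N p; omega⟩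
  show IsPthPow p (∏ k ∈ Finset.Icc 1 (p - 1),
    (Nat.factorial ((N - 1) / p * k) : ZMod N) ^ (k ^ i))
  set M := (N - 1) / p with hMdef
  have hpM : p * M = N - 1 := Nat.mul_div_cancel' hdvdN
  set F : ℕ → ZMod N := fun k => ((M * k).factorial : ZMod N) with hF
  set S := ∏ k ∈ Finset.Icc 1 (p - 1), F k ^ (k ^ i) with hSdef
  -- bounds
  have hMkle : ∀ k, k ∈ Finset.Icc 1 (p - 1) → M * k ≤ N - 1 := by
    intro k hk
    rw [Finset.mem_Icc] at hk
    calc M * k ≤ M * p := Nat.mul_le_mul_left M (by omega)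
      _ = N - 1 := by rw [mul_comm]; exact hpM
  have hfacne : ∀ n, n ≤ N - 1 → ((n.factorial : ℕ) : ZMod N) ≠ 0 := by
    intro n hn h
    rw [ZMod.natCast_eq_zero_iff] at h
    have := (Nat.Prime.dvd_factorial hN).mp h
    omega
  have hFne : ∀ k ∈ Finset.Icc 1 (p - 1), F k ≠ 0 := fun k hk => hfacne _ (hMkle k hk)
  have hSne : S ≠ 0 := by
    rw [hSdef]
    rw [Finset.prod_ne_zero_iff]
    exact fun k hk => pow_ne_zero _ (hFne k hk)
  set T := ∏ k ∈ Finset.Icc 1 (p - 1), F k ^ ((p - k) ^ i) with hTdef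
  have hTne : T ≠ 0 := by
    rw [hTdef, Finset.prod_ne_zero_iff]
    exact fun k hk => pow_ne_zero _ (hFne k hk)
  -- reindex T
  have hMpk : ∀ k ∈ Finset.Icc 1 (p - 1), M * (p - k) = N - 1 - M * k := by
    intro k hk
    rw [Finset.mem_Icc] at hk
    have h1 : M * (p - k) + M * k = N - 1 := by
      rw [← Nat.mul_add]
      rw [show p - k + k = p from by omega, mul_comm]
      exact hpM
    omega
  have hT2 : T = ∏ k ∈ Finset.Icc 1 (p - 1), ((N - 1 - M * k).factorial : ZMod N) ^ (k ^ i) := by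
    rw [hTdef]
    refine Finset.prod_nbij' (fun k => p - k) (fun k => p - k) ?_ ?_ ?_ ?_ ?_
    · intro a ha; simp only [Finset.mem_Icc] at *; omega
    · intro a ha; simp only [Finset.mem_Icc] at *; omega
    · intro a ha; simp only [Finset.mem_Icc] at *; omega
    · intro a ha; simp only [Finset.mem_Icc] at *; omega
    · intro a ha
      rw [Finset.mem_Icc] at ha
      rw [hF]
      simp only
      rw [← hMpk (p - a) (by rw [Finset.mem_Icc]; omega),
        show p - (p - a) = a from by omega]
  -- Claim A
  set E := ∑ k ∈ Finset.Icc 1 (p - 1), (M * k + 1) * k ^ i with hEdef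
  have hA : S * T = (-1 : ZMod N) ^ E := by
    rw [hSdef, hT2, ← Finset.prod_mul_distrib, hEdef, ← Finset.prod_pow_eq_pow_sum]
    refine Finset.prod_congr rfl ?_
    intro k hk
    rw [← mul_pow, hF]
    simp only
    rw [mul_comm (((M * k).factorial : ZMod N)) _, fact_reflect N (M * k) (hMkle k hk), ← pow_mul]
  -- Claim B
  have hdvd : ∀ k ∈ Finset.Icc 1 (p - 1), p ∣ ((p - k) ^ i + k ^ i * (p - 1)) := by
    intro k hk
    rw [Finset.mem_Icc] at hk
    rw [← ZMod.natCast_eq_zero_iff]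
    push_cast [Nat.cast_sub (by omega : k ≤ p), Nat.cast_sub (by omega : 1 ≤ p)]
    rw [ZMod.natCast_self]
    rw [zero_sub, zero_sub, hi.neg_pow]
    ring
  set c : ℕ → ℕ := fun k => ((p - k) ^ i + k ^ i * (p - 1)) / p with hc
  set q := ∏ k ∈ Finset.Icc 1 (p - 1), F k ^ (c k) with hqdef
  have hqne : q ≠ 0 := by
    rw [hqdef, Finset.prod_ne_zero_iff]
    exact fun k hk => pow_ne_zero _ (hFne k hk)
  have hB : T * S ^ (p - 1) = q ^ p := by
    rw [hTdef, hSdef, ← Finset.prod_pow, ← Finset.prod_mul_distrib, hqdef, ← Finset.prod_pow]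
    refine Finset.prod_congr rfl ?_
    intro k hk
    rw [← pow_mul, ← pow_mul, ← pow_add]
    congr 1
    rw [hc]
    simp only
    rw [Nat.div_mul_cancel (hdvd k hk)]
  -- final algebra
  obtain ⟨r, hr⟩ : ∃ r, p = r + 1 := ⟨p - 1, by omega⟩
  have hkey : S ^ 2 * q ^ p = (-1 : ZMod N) ^ E * S ^ p := by
    rw [← hB, ← hA, show p - 1 = r from by omega, show p = r + 1 from hr]
    ring
  have hneg : (((-1 : ZMod N)) ^ E) ^ p = (-1) ^ E := by
    rw [← pow_mul, mul_comm, pow_mul, Odd.neg_one_pow ⟨j, hj⟩]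
  have hqpne : q ^ p ≠ 0 := pow_ne_zero _ hqne
  have hS2 : S ^ 2 = ((-1 : ZMod N) ^ E * S * q⁻¹) ^ p := by
    rw [mul_pow, mul_pow, inv_pow, hneg]
    field_simp
    linear_combination hkey
  refine ⟨((-1 : ZMod N) ^ E * S * q⁻¹) ^ (j + 1) * S⁻¹, ?_⟩
  have h1 : (((-1 : ZMod N) ^ E * S * q⁻¹) ^ (j + 1) * S⁻¹) ^ p
      = ((((-1 : ZMod N) ^ E * S * q⁻¹)) ^ p) ^ (j + 1) * (S ^ p)⁻¹ := by
    rw [mul_pow, inv_pow, ← pow_mul, mul_comm (j + 1) p, pow_mul]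
  rw [h1, ← hS2, ← pow_mul, show 2 * (j + 1) = p + 1 from by omega, pow_succ]
  field_simp
end

section
/- Let p ≥ 5 and N be primes with N ≡ 1 (mod p). Then M_1 is a p-th power in 𝔽_N^× if and only if Merel's number C is a p-th power in 𝔽_N^×. -/
open scoped TensorProduct

section MerelAux
open Finset
lemma aux_pow_mod {R : Type*} [Monoid R] {x : R} {p : ℕ} (hx : x ^ p = 1) (a : ℕ) :
    x ^ a = x ^ (a % p) := by
  conv_lhs => rw [← Nat.div_add_mod a p]
  rw [pow_add, pow_mul, hx, one_pow, one_mul]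

lemma aux_pow_congr {R : Type*} [Monoid R] {x : R} {p : ℕ} (hx : x ^ p = 1) {a b : ℕ}
    (h : a ≡ b [MOD p]) : x ^ a = x ^ b := by
  rw [aux_pow_mod hx a, aux_pow_mod hx b, h]

lemma aux_sum_id (m : ℕ) : (∑ k ∈ Icc 1 m, k) * 2 = m * (m + 1) := by
  induction m with
  | zero => simp
  | succ n ih => rw [Finset.sum_Icc_succ_top (by omega)]; ring_nf; ring_nf at ih; omega

lemma aux_sum_sq (m : ℕ) : (∑ k ∈ Icc 1 m, k * k) * 6 = m * (m + 1) * (2 * m + 1) := by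
  induction m with
  | zero => simp
  | succ n ih =>
    rw [Finset.sum_Icc_succ_top (by omega), add_mul, ih]
    ring

lemma aux_pair {N m : ℕ} (h : N = 2 * m + 1) (f : ℕ → ZMod N) :
    ∏ k ∈ Icc 1 (N - 1), f k = ∏ k ∈ Icc 1 m, (f k * f (N - k)) := by
  have hsplit : Icc 1 (N - 1) = Icc 1 m ∪ Icc (m + 1) (N - 1) := by
    ext j; simp only [mem_union, mem_Icc]; omega
  have hdisj : Disjoint (Icc 1 m) (Icc (m + 1) (N - 1)) := by
    rw [Finset.disjoint_left]; intro j hj hj'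
    simp only [mem_Icc] at hj hj'; omega
  rw [hsplit, Finset.prod_union hdisj, Finset.prod_mul_distrib]
  congr 1
  refine Finset.prod_nbij' (fun k => N - k) (fun k => N - k) ?_ ?_ ?_ ?_ ?_
  all_goals intro a ha; simp only [mem_Icc] at *
  · omega
  · omega
  · omega
  · omega
  · congr 1; omega

lemma aux_evenodd {N m : ℕ} (h : N = 2 * m + 1) (f : ℕ → ZMod N) :
    ∏ k ∈ Icc 1 (N - 1), f k
      = (∏ k ∈ Icc 1 m, f (2 * k)) * ∏ k ∈ Icc 1 m, f (N - 2 * k) := by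
  have h1 : ∀ x ∈ Icc 1 m, ∀ y ∈ Icc 1 m, 2 * x = 2 * y → x = y := by intros; omega
  have h2 : ∀ x ∈ Icc 1 m, ∀ y ∈ Icc 1 m, N - 2 * x = N - 2 * y → x = y := by
    intro x hx y hy; simp only [mem_Icc] at hx hy; omega
  have hset : Icc 1 (N - 1)
      = (Icc 1 m).image (fun k => 2 * k) ∪ (Icc 1 m).image (fun k => N - 2 * k) := by
    ext j
    simp only [mem_union, mem_image, mem_Icc]
    constructor
    · intro hj
      rcases Nat.even_or_odd j with ⟨t, ht⟩ | ⟨t, ht⟩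
      · exact Or.inl ⟨t, by omega, by omega⟩
      · exact Or.inr ⟨(N - j) / 2, by omega, by omega⟩
    · rintro (⟨k, hk, rfl⟩ | ⟨k, hk, rfl⟩) <;> omega
  have hdisj : Disjoint ((Icc 1 m).image (fun k => 2 * k))
      ((Icc 1 m).image (fun k => N - 2 * k)) := by
    rw [Finset.disjoint_left]
    rintro j hj hj'
    simp only [mem_image, mem_Icc] at hj hj'
    obtain ⟨k, hk, rfl⟩ := hj
    obtain ⟨k', hk', he⟩ := hj'
    omega
  rw [hset, Finset.prod_union hdisj, Finset.prod_image h1, Finset.prod_image h2]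

lemma aux_key {p N : ℕ} (hp : p.Prime) (hp5 : 5 ≤ p) (hN : N.Prime) (hNmod : N % p = 1) :
    ((Mnum N 1) ^ 3 * (MerelC N) ^ 2) ^ ((N - 1) / p) = 1 := by
  haveI : Fact N.Prime := ⟨hN⟩
  have hN2 := hN.two_le
  have hdm := Nat.div_add_mod N p
  have hdvd : p ∣ N - 1 := ⟨N / p, by omega⟩
  have hNge : p + 1 ≤ N := by
    have := Nat.le_of_dvd (show 0 < N - 1 by
      rcases Nat.eq_or_lt_of_le hN2 with h | h
      · exfalso; rw [← h, Nat.mod_eq_of_lt (by omega)] at hNmod; omega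
      · omega) hdvd
    omega
  have hNodd : N % 2 = 1 := by
    rcases hN.eq_two_or_odd with h2 | h; · omega
    · exact h
  set m := (N - 1) / 2 with hmdef
  have hm : N = 2 * m + 1 := by omega
  set M := (N - 1) / p with hMdef
  have hMeq : p * M = N - 1 := Nat.mul_div_cancel' hdvd
  have hpodd : Odd p := hp.odd_of_ne_two (by omega)
  have hMeven : Even M := by
    rcases Nat.even_mul.mp (show Even (p * M) by rw [hMeq]; exact ⟨m, by omega⟩) with h | h
    · exact absurd (Nat.even_iff.mp h) (by have := Nat.odd_iff.mp hpodd; omega)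
    · exact h
  have hpm : p ∣ m := by
    have h2m : p ∣ m * 2 := by rw [show m * 2 = N - 1 by omega]; exact hdvd
    exact (hp.coprime_iff_not_dvd.mpr (fun hd => by
      have := Nat.le_of_dvd (by norm_num) hd; omega)).dvd_of_dvd_mul_right h2m
  set w : ℕ → ZMod N := fun k => (k : ZMod N) ^ M with hwdef
  have hkne : ∀ k : ℕ, 1 ≤ k → k ≤ N - 1 → (k : ZMod N) ≠ 0 := by
    intro k h1 h2 h0
    have := (ZMod.natCast_eq_zero_iff k N).mp h0
    have := Nat.le_of_dvd (by omega) this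
    omega
  have hwne : ∀ k : ℕ, 1 ≤ k → k ≤ N - 1 → w k ≠ 0 := fun k h1 h2 =>
    pow_ne_zero _ (hkne k h1 h2)
  have hwp : ∀ k : ℕ, 1 ≤ k → k ≤ N - 1 → w k ^ p = 1 := by
    intro k h1 h2
    rw [hwdef]
    dsimp only
    rw [← pow_mul, mul_comm M p, hMeq]
    exact ZMod.pow_card_sub_one_eq_one (hkne k h1 h2)
  have hwneg : ∀ k : ℕ, k ≤ N - 1 → w (N - k) = w k := by
    intro k h2
    have hc : ((N - k : ℕ) : ZMod N) = -(k : ZMod N) := by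
      rw [Nat.cast_sub (by omega), ZMod.natCast_self, zero_sub]
    rw [hwdef]
    dsimp only
    rw [hc, hMeven.neg_pow]
  have hwmul : ∀ a b : ℕ, w (a * b) = w a * w b := by
    intro a b
    rw [hwdef]
    dsimp only
    push_cast
    rw [mul_pow]
  have hNp1 : (N : ZMod p) = 1 := by
    rw [← ZMod.natCast_mod, hNmod, Nat.cast_one]
  have hmaster : ∀ e f : ℕ → ℕ, (∀ k ∈ Icc 1 m, e k ≡ f k [MOD p]) →
      ∏ k ∈ Icc 1 m, w k ^ e k = ∏ k ∈ Icc 1 m, w k ^ f k := by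
    intro e f he
    refine Finset.prod_congr rfl fun k hk => ?_
    simp only [mem_Icc] at hk
    exact aux_pow_congr (hwp k hk.1 (by omega)) (he k (by simp [mem_Icc]; omega))
  -- Step A : pairing evaluation of ∏ j^{j²M}
  have stepA : ∏ j ∈ Icc 1 (N - 1), w j ^ (j * j)
      = ∏ k ∈ Icc 1 m, w k ^ (k * k + (N - k) * (N - k)) := by
    rw [aux_pair hm (fun j => w j ^ (j * j))]
    refine Finset.prod_congr rfl fun k hk => ?_
    simp only [mem_Icc] at hk
    rw [hwneg k (by omega), pow_add]
  -- Step B : even/odd evaluation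
  set Q := ∑ k ∈ Icc 1 m, (4 * (k * k) + (N - 2 * k) * (N - 2 * k)) with hQdef
  have stepB : ∏ j ∈ Icc 1 (N - 1), w j ^ (j * j)
      = w 2 ^ Q * ∏ k ∈ Icc 1 m, w k ^ (4 * (k * k) + (N - 2 * k) * (N - 2 * k)) := by
    rw [aux_evenodd hm (fun j => w j ^ (j * j))]
    have hA1 : (∏ k ∈ Icc 1 m, w (2 * k) ^ (2 * k * (2 * k)))
        * ∏ k ∈ Icc 1 m, w (N - 2 * k) ^ ((N - 2 * k) * (N - 2 * k))
        = ∏ k ∈ Icc 1 m, (w 2 * w k) ^ (4 * (k * k) + (N - 2 * k) * (N - 2 * k)) := by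
      rw [← Finset.prod_mul_distrib]
      refine Finset.prod_congr rfl fun k hk => ?_
      simp only [mem_Icc] at hk
      rw [hwneg (2 * k) (by omega), hwmul 2 k, pow_add,
        show 2 * k * (2 * k) = 4 * (k * k) by ring]
    rw [hA1]
    simp_rw [mul_pow]
    rw [Finset.prod_mul_distrib, Finset.prod_pow_eq_pow_sum]
  -- p divides Q
  have hcop2 : Nat.Coprime p 2 := hp.coprime_iff_not_dvd.mpr
    (fun hd => by have := Nat.le_of_dvd (by norm_num) hd; omega)
  have hcop3 : Nat.Coprime p 3 := hp.coprime_iff_not_dvd.mpr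
    (fun hd => by have := Nat.le_of_dvd (by norm_num) hd; omega)
  have hcop6 : Nat.Coprime p 6 := by
    have := hcop2.mul_right hcop3
    norm_num at this ⊢
    exact this
  have hsum1 : p ∣ ∑ k ∈ Icc 1 m, k := by
    have h2 : p ∣ (∑ k ∈ Icc 1 m, k) * 2 := by
      rw [aux_sum_id]; exact Dvd.dvd.mul_right hpm (m + 1)
    exact hcop2.dvd_of_dvd_mul_right h2
  have hsum2 : p ∣ ∑ k ∈ Icc 1 m, k * k := by
    have h6 : p ∣ (∑ k ∈ Icc 1 m, k * k) * 6 := by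
      rw [aux_sum_sq]; exact Dvd.dvd.mul_right (Dvd.dvd.mul_right hpm (m + 1)) (2 * m + 1)
    exact hcop6.dvd_of_dvd_mul_right h6
  have z2 : (∑ k ∈ Icc 1 m, ((k * k : ℕ) : ZMod p)) = 0 := by
    rw [← Nat.cast_sum]; exact (ZMod.natCast_eq_zero_iff _ p).mpr hsum2
  have z1 : (∑ k ∈ Icc 1 m, ((k : ℕ) : ZMod p)) = 0 := by
    rw [← Nat.cast_sum]; exact (ZMod.natCast_eq_zero_iff _ p).mpr hsum1
  have zm : ((m : ℕ) : ZMod p) = 0 := (ZMod.natCast_eq_zero_iff _ p).mpr hpm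
  have hQp : p ∣ Q := by
    rw [← ZMod.natCast_eq_zero_iff, hQdef, Nat.cast_sum]
    have hterm : ∀ k ∈ Icc 1 m, ((4 * (k * k) + (N - 2 * k) * (N - 2 * k) : ℕ) : ZMod p)
        = 8 * ((k * k : ℕ) : ZMod p) + 1 - 4 * ((k : ℕ) : ZMod p) := by
      intro k hk
      simp only [mem_Icc] at hk
      have h2k : 2 * k ≤ N := by omega
      push_cast [Nat.cast_sub h2k]
      rw [hNp1]; ring
    rw [Finset.sum_congr rfl hterm, Finset.sum_sub_distrib, Finset.sum_add_distrib,
      ← Finset.mul_sum, ← Finset.mul_sum, z2, z1, Finset.sum_const, Nat.card_Icc]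
    simp [zm]
  have hQone : w 2 ^ Q = 1 := by
    obtain ⟨t, ht⟩ := hQp
    rw [ht, pow_mul, hwp 2 (by omega) (by omega), one_pow]
  -- Step C : combine the two evaluations
  have stepC : ∏ k ∈ Icc 1 m, w k ^ (k * k + (N - k) * (N - k))
      = ∏ k ∈ Icc 1 m, w k ^ (4 * (k * k) + (N - 2 * k) * (N - 2 * k)) := by
    rw [← stepA, stepB, hQone, one_mul]
  have hPne : ∀ e : ℕ → ℕ, (∏ k ∈ Icc 1 m, w k ^ e k) ≠ 0 := by
    intro e
    rw [Finset.prod_ne_zero_iff]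
    intro k hk
    simp only [mem_Icc] at hk
    exact pow_ne_zero _ (hwne k hk.1 (by omega))
  -- Step D : ∏ w k ^ (2k) = ∏ w k ^ (6k²)
  have hmod : ∀ k ∈ Icc 1 m, (4 * (k * k) + (N - 2 * k) * (N - 2 * k)) + 2 * k
      ≡ (k * k + (N - k) * (N - k)) + 6 * (k * k) [MOD p] := by
    intro k hk
    simp only [mem_Icc] at hk
    rw [← ZMod.natCast_eq_natCast_iff]
    push_cast [Nat.cast_sub (show 2 * k ≤ N by omega), Nat.cast_sub (show k ≤ N by omega)]
    rw [hNp1]; ring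
  have stepD : ∏ k ∈ Icc 1 m, w k ^ (2 * k) = ∏ k ∈ Icc 1 m, w k ^ (6 * (k * k)) := by
    have h1 : (∏ k ∈ Icc 1 m, w k ^ (4 * (k * k) + (N - 2 * k) * (N - 2 * k)))
        * ∏ k ∈ Icc 1 m, w k ^ (2 * k)
        = (∏ k ∈ Icc 1 m, w k ^ (k * k + (N - k) * (N - k)))
        * ∏ k ∈ Icc 1 m, w k ^ (6 * (k * k)) := by
      rw [← Finset.prod_mul_distrib, ← Finset.prod_mul_distrib]
      simp_rw [← pow_add]
      exact hmaster _ _ hmod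
    rw [stepC] at h1
    exact mul_left_cancel₀ (hPne _) h1
  -- Mnum and MerelC raised to M
  have hMnumM : (Mnum N 1) ^ M = ∏ j ∈ Icc 1 (N - 1), w j ^ (∑ a ∈ Icc 1 (j - 1), a) := by
    rw [Mnum, ← Finset.prod_pow]
    refine Finset.prod_congr rfl fun j hj => ?_
    simp_rw [pow_one]
    rw [Finset.prod_pow_eq_pow_sum, pow_right_comm]
  have hMnum2 : ((Mnum N 1) ^ M) ^ 2 = ∏ j ∈ Icc 1 (N - 1), w j ^ (j * (j - 1)) := by
    rw [hMnumM, ← Finset.prod_pow]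
    refine Finset.prod_congr rfl fun j hj => ?_
    simp only [mem_Icc] at hj
    rw [← pow_mul, aux_sum_id (j - 1), show j - 1 + 1 = j by omega, mul_comm]
  have hMerM : (MerelC N) ^ M = ∏ k ∈ Icc 1 m, w k ^ k := by
    rw [MerelC, ← Finset.prod_pow]
    exact Finset.prod_congr rfl fun k hk => pow_right_comm _ _ _
  -- the element Z
  set Z := ((Mnum N 1) ^ 3 * (MerelC N) ^ 2) ^ M with hZdef
  have hZform : Z = ((Mnum N 1) ^ M) ^ 3 * ((MerelC N) ^ M) ^ 2 := by
    rw [hZdef, mul_pow, pow_right_comm, pow_right_comm (MerelC N)]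
  have hZ2 : Z ^ 2 = 1 := by
    have hfull : (∏ j ∈ Icc 1 (N - 1), w j ^ (j * (j - 1))) ^ 3
        = ∏ k ∈ Icc 1 m, w k ^ (k * (k - 1) * 3 + (N - k) * (N - k - 1) * 3) := by
      rw [← Finset.prod_pow]
      simp_rw [← pow_mul]
      rw [aux_pair hm (fun j => w j ^ (j * (j - 1) * 3))]
      refine Finset.prod_congr rfl fun k hk => ?_
      simp only [mem_Icc] at hk
      rw [hwneg k (by omega), pow_add]
    have hz : Z ^ 2 = (∏ k ∈ Icc 1 m, w k ^ (k * (k - 1) * 3 + (N - k) * (N - k - 1) * 3))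
        * ∏ k ∈ Icc 1 m, w k ^ (k * 4) := by
      rw [hZform, mul_pow, pow_right_comm _ 3 2, hMnum2, hfull, ← pow_mul,
        show (2 : ℕ) * 2 = 4 from rfl, hMerM, ← Finset.prod_pow]
      congr 1
      exact Finset.prod_congr rfl fun k hk => by rw [← pow_mul]
    have hmod2 : ∀ k ∈ Icc 1 m,
        ((k * (k - 1) * 3 + (N - k) * (N - k - 1) * 3 + k * 4) + 2 * k)
          ≡ 6 * (k * k) [MOD p] := by
      intro k hk
      simp only [mem_Icc] at hk
      rw [← ZMod.natCast_eq_natCast_iff]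
      push_cast [Nat.cast_sub (show k ≤ N by omega), Nat.cast_sub (show 1 ≤ N - k by omega),
        Nat.cast_sub (show 1 ≤ k by omega)]
      rw [hNp1]; ring
    have h2 : (∏ k ∈ Icc 1 m, w k ^ (k * (k - 1) * 3 + (N - k) * (N - k - 1) * 3 + k * 4))
        * ∏ k ∈ Icc 1 m, w k ^ (2 * k) = 1 * ∏ k ∈ Icc 1 m, w k ^ (2 * k) := by
      rw [← Finset.prod_mul_distrib]
      simp_rw [← pow_add]
      rw [one_mul, hmaster _ _ hmod2, ← stepD]
    have h3 := mul_right_cancel₀ (hPne (fun k => 2 * k)) h2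
    calc Z ^ 2 = (∏ k ∈ Icc 1 m, w k ^ (k * (k - 1) * 3 + (N - k) * (N - k - 1) * 3))
          * ∏ k ∈ Icc 1 m, w k ^ (k * 4) := hz
      _ = ∏ k ∈ Icc 1 m, w k ^ (k * (k - 1) * 3 + (N - k) * (N - k - 1) * 3 + k * 4) := by
          rw [← Finset.prod_mul_distrib]
          exact Finset.prod_congr rfl fun k hk => (pow_add _ _ _).symm
      _ = 1 := h3
  have hMnumne : Mnum N 1 ≠ 0 := by
    rw [Mnum, Finset.prod_ne_zero_iff]
    intro k hk
    rw [Finset.prod_ne_zero_iff]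
    intro a ha
    simp only [mem_Icc] at hk
    exact pow_ne_zero _ (hkne k hk.1 hk.2)
  have hCne : MerelC N ≠ 0 := by
    rw [MerelC, Finset.prod_ne_zero_iff]
    intro k hk
    simp only [mem_Icc] at hk
    exact pow_ne_zero _ (hkne k hk.1 (by omega))
  have hZp : Z ^ p = 1 := by
    rw [hZdef, ← pow_mul, mul_comm M p, hMeq]
    exact ZMod.pow_card_sub_one_eq_one
      (mul_ne_zero (pow_ne_zero _ hMnumne) (pow_ne_zero _ hCne))
  obtain ⟨t, ht⟩ := hpodd
  calc Z = (Z ^ 2) ^ t * Z := by rw [hZ2, one_pow, one_mul]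
    _ = Z ^ (2 * t + 1) := by rw [← pow_mul, ← pow_succ]
    _ = Z ^ p := by rw [← ht]
    _ = 1 := hZp

end MerelAux

lemma isPthPow_iff {p N : ℕ} (hN : N.Prime) (hp : 0 < p) (hd : p ∣ N - 1)
    {x : ZMod N} (hx : x ≠ 0) : IsPthPow p x ↔ x ^ ((N - 1) / p) = 1 := by
  haveI : Fact N.Prime := ⟨hN⟩
  set M := (N - 1) / p with hMdef
  have hMeq : p * M = N - 1 := Nat.mul_div_cancel' hd
  have h0 : 0 < N - 1 := by have := hN.two_le; omega
  have hM0 : 0 < M := Nat.div_pos (Nat.le_of_dvd h0 hd) hp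
  constructor
  · rintro ⟨y, rfl⟩
    have hy : y ≠ 0 := by
      rintro rfl
      exact hx (zero_pow hp.ne')
    rw [← pow_mul, hMeq]
    exact ZMod.pow_card_sub_one_eq_one hy
  · intro h
    obtain ⟨u, rfl⟩ := hx.isUnit
    obtain ⟨g, hg⟩ := IsCyclic.exists_generator (α := (ZMod N)ˣ)
    have hord : orderOf g = N - 1 := by
      rw [orderOf_eq_card_of_forall_mem_zpowers hg, Nat.card_eq_fintype_card,
        ZMod.card_units]
    obtain ⟨n, hn⟩ := (Submonoid.mem_powers_iff _ _).mp
      (mem_powers_iff_mem_zpowers.mpr (hg u))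
    have hu : u ^ M = 1 := by
      ext
      push_cast
      exact h
    have hdvd : p * M ∣ n * M := by
      rw [hMeq, ← hord]
      apply orderOf_dvd_of_pow_eq_one
      rw [pow_mul, hn, hu]
    have hpn : p ∣ n := by
      rw [mul_comm p M, mul_comm n M] at hdvd
      exact (Nat.mul_dvd_mul_iff_left hM0).mp hdvd
    obtain ⟨c, rfl⟩ := hpn
    refine ⟨(g ^ c : (ZMod N)ˣ), ?_⟩
    rw [← Units.val_pow_eq_pow_val, ← pow_mul, mul_comm c p, hn]


/-- For primes `p ≥ 5` and `N ≡ 1 (mod p)`, `M_1` is a `p`-th power in `𝔽_N^×` iff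
Merel's number `C = ∏_{k=1}^{(N-1)/2} k^k` is. -/
theorem statement13 (p N : ℕ) (hp : p.Prime) (hp5 : 5 ≤ p)
    (hN : N.Prime) (hNmod : N % p = 1) :
    IsPthPow p (Mnum N 1) ↔ IsPthPow p (MerelC N) := by
  haveI : Fact N.Prime := ⟨hN⟩
  have hN2 := hN.two_le
  have hdvd : p ∣ N - 1 := ⟨N / p, by have := Nat.div_add_mod N p; omega⟩
  set M := (N - 1) / p with hMdef
  have hMeq : p * M = N - 1 := Nat.mul_div_cancel' hdvd
  have hkne : ∀ k : ℕ, 1 ≤ k → k ≤ N - 1 → (k : ZMod N) ≠ 0 := by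
    intro k h1 h2 h0
    have := (ZMod.natCast_eq_zero_iff k N).mp h0
    have := Nat.le_of_dvd (by omega) this
    omega
  have hMnumne : Mnum N 1 ≠ 0 := by
    rw [Mnum, Finset.prod_ne_zero_iff]
    intro k hk
    rw [Finset.prod_ne_zero_iff]
    intro a ha
    simp only [Finset.mem_Icc] at hk
    exact pow_ne_zero _ (hkne k hk.1 hk.2)
  have hCne : MerelC N ≠ 0 := by
    rw [MerelC, Finset.prod_ne_zero_iff]
    intro k hk
    simp only [Finset.mem_Icc] at hk
    exact pow_ne_zero _ (hkne k hk.1 (by omega))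
  have hkey := aux_key hp hp5 hN hNmod
  rw [isPthPow_iff hN hp.pos hdvd hMnumne, isPthPow_iff hN hp.pos hdvd hCne]
  set A := Mnum N 1 ^ M with hAdef
  set B := MerelC N ^ M with hBdef
  have hA : A ^ 3 * B ^ 2 = 1 := by
    rw [hAdef, hBdef, pow_right_comm, pow_right_comm (MerelC N), ← mul_pow]
    exact hkey
  have hAp : A ^ p = 1 := by
    rw [hAdef, ← pow_mul, mul_comm M p, hMeq]
    exact ZMod.pow_card_sub_one_eq_one hMnumne
  have hBp : B ^ p = 1 := by
    rw [hBdef, ← pow_mul, mul_comm M p, hMeq]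
    exact ZMod.pow_card_sub_one_eq_one hCne
  obtain ⟨t, ht⟩ := hp.odd_of_ne_two (by omega)
  constructor
  · intro hA1
    rw [hA1, one_pow, one_mul] at hA
    calc B = (B ^ 2) ^ t * B := by rw [hA, one_pow, one_mul]
      _ = B ^ (2 * t + 1) := by rw [← pow_mul, ← pow_succ]
      _ = 1 := by rw [← ht]; exact hBp
  · intro hB1
    rw [hB1, one_pow, mul_one] at hA
    have h3p : ¬ 3 ∣ p := fun hd => by
      have := (Nat.prime_dvd_prime_iff_eq (by norm_num) hp).mp hd
      omega
    have h3 : p % 3 = 1 ∨ p % 3 = 2 := by omega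
    have key3 : A ^ (p % 3) = 1 := by
      have hsplit : A ^ p = A ^ (3 * (p / 3) + p % 3) := by rw [Nat.div_add_mod]
      rw [hsplit, pow_add, pow_mul, hA, one_pow, one_mul] at hAp
      exact hAp
    rcases h3 with h | h
    · rw [h, pow_one] at key3; exact key3
    · rw [h] at key3
      have h32 : A ^ 3 = A ^ 2 * A := by ring
      rw [h32, key3, one_mul] at hA
      exact hA
end

section
/- Let p and N be primes with p odd and N ≡ 1 (mod p), let i be odd with 1 ≤ i ≤ p−4, and let L = ℚ(ζ_{pN}) with ζ_N ∈ L a primitive N-th root of unity and ζ_p ∈ L a primitive p-th root of unity. Let η : (ℤ/Nℤ)^× → L^× be a group homomorphism all of whose values are p-th roots of unity, and set 𝒢_{−i} = ∏_{a ∈ (ℤ/pℤ)^×} g_{η^a}^{τ(a^i)}, where g_{η^r} = ∑_{k=1}^{N−1} η(k)^r ζ_N^k and τ(x) = x̃^p for the representative x̃ ∈ {1, …, p−1} of x. Then σ(𝒢_{−i}) = 𝒢_{−i} for every automorphism σ of L over ℚ with σ(ζ_p) = ζ_p; equivalently, 𝒢_{−i} lies in the subfield ℚ(ζ_p) of L.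 -/
/-- The Gauss sum `g_{η^r} = ∑_{k=1}^{N-1} η(k)^r ζ_N^k`, written as a sum over the
units of `ZMod N` (for `N` prime this is the same index set). -/
noncomputable def gaussSum' {N : ℕ} [NeZero N] {L : Type*} [Field L]
    (η : (ZMod N)ˣ →* L) (ζN : L) (r : ℕ) : L :=
  ∑ u : (ZMod N)ˣ, η u ^ r * ζN ^ ((u : ZMod N).val)

/-- `τ : (ℤ/pℤ)^× → ℤ_{>0}`, `τ(x) = x̃^p` where `x̃ ∈ {1, …, p-1}` represents `x`. -/
def tauRep {p : ℕ} (x : (ZMod p)ˣ) : ℕ :=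
  ((x : ZMod p).val) ^ p

/-- `𝒢_{-i} = ∏_{a ∈ (ℤ/pℤ)^×} g_{η^a}^{τ(a^i)}`. -/
noncomputable def Gminus (p : ℕ) [NeZero p] {N : ℕ} [NeZero N] {L : Type*} [Field L]
    (η : (ZMod N)ˣ →* L) (ζN : L) (i : ℕ) : L :=
  ∏ a : (ZMod p)ˣ, gaussSum' η ζN ((a : ZMod p).val) ^ tauRep (a ^ i)

/-- `𝒢_{-i}` is fixed by every automorphism of `L = ℚ(ζ_{pN})` over `ℚ` fixing `ζ_p`;
equivalently `𝒢_{-i} ∈ ℚ(ζ_p)`. -/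
theorem statement16 (p N : ℕ) (hp : p.Prime) (hpodd : Odd p) (hN : N.Prime)
    (hNmod : N % p = 1) [NeZero p] [NeZero N]
    (i : ℕ) (hiodd : Odd i) (hi1 : 1 ≤ i) (hi2 : i ≤ p - 4)
    (L : Type*) [Field L] [Algebra ℚ L]
    [IsCyclotomicExtension {p * N} ℚ L]
    (ζN ζp : L) (hζN : IsPrimitiveRoot ζN N) (hζp : IsPrimitiveRoot ζp p)
    (η : (ZMod N)ˣ →* L) (hη : ∀ u, η u ^ p = 1) :
    ∀ σ : L ≃ₐ[ℚ] L, σ ζp = ζp →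
      σ (Gminus p η ζN i) = Gminus p η ζN i := by
  intro σ hσp
  haveI : Fact p.Prime := ⟨hp⟩
  haveI : Fact N.Prime := ⟨hN⟩
  -- σ fixes the values of η
  have hfix : ∀ u, σ (η u) = η u := by
    intro u
    obtain ⟨k, -, hk⟩ := hζp.eq_pow_of_pow_eq_one (hη u)
    rw [← hk, map_pow, hσp]
  -- σ sends ζN to ζN ^ k with k coprime to N
  have hσN : IsPrimitiveRoot (σ ζN) N :=
    hζN.map_of_injective σ.injective
  obtain ⟨k, -, hk⟩ := hζN.eq_pow_of_pow_eq_one (hσN.pow_eq_one)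
  have hcop : k.Coprime N := (hζN.pow_iff_coprime N.pos_of_neZero k).mp (hk ▸ hσN)
  set c : (ZMod N)ˣ := ZMod.unitOfCoprime k hcop with hc
  have hcval : ((c : ZMod N) : ZMod N) = (k : ZMod N) := by simp [hc]
  -- power congruence for ζN
  have hpow : ∀ m n : ℕ, (m : ZMod N) = (n : ZMod N) → ζN ^ m = ζN ^ n := by
    intro m n h
    rw [pow_eq_pow_mod m hζN.pow_eq_one, pow_eq_pow_mod n hζN.pow_eq_one]
    rw [ZMod.natCast_eq_natCast_iff'] at h
    rw [h]
  -- action of σ on Gauss sums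
  have hgauss : ∀ r : ℕ, σ (gaussSum' η ζN r) = η c⁻¹ ^ r * gaussSum' η ζN r := by
    intro r
    simp only [gaussSum', map_sum, Finset.mul_sum]
    rw [← Equiv.sum_comp (Equiv.mulLeft c⁻¹)]
    refine Finset.sum_congr rfl fun u _ => ?_
    simp only [Equiv.coe_mulLeft]
    rw [map_mul, map_pow, map_pow, hfix, ← hk, ← pow_mul]
    have h2 : ζN ^ (k * ((c⁻¹ * u : (ZMod N)ˣ) : ZMod N).val) = ζN ^ (u : ZMod N).val := by
      apply hpow
      rw [Nat.cast_mul, ZMod.natCast_val, ZMod.cast_id, ZMod.natCast_val, ZMod.cast_id,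
        ← hcval, ← Units.val_mul, mul_inv_cancel_left]
    rw [h2, map_mul, mul_pow]
    ring
  -- the total exponent
  set S : ℕ := ∑ a : (ZMod p)ˣ, (a : ZMod p).val * tauRep (a ^ i) with hS
  have hpS : (p : ℕ) ∣ S := by
    have : (S : ZMod p) = 0 := by
      rw [hS]
      push_cast [tauRep]
      have : ∀ a : (ZMod p)ˣ,
          (((a : ZMod p).val : ZMod p)) * ((((a : ZMod p) ^ i).val : ZMod p)) ^ p
          = (a : ZMod p) ^ (i + 1) := by
        intro a
        rw [ZMod.natCast_val, ZMod.cast_id, ZMod.natCast_val, ZMod.cast_id,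
          ZMod.pow_card, pow_succ]
        ring
      rw [Finset.sum_congr rfl fun a _ => this a]
      have hne : ¬ (p - 1) ∣ (i + 1) := by
        intro h
        have h1 : p - 1 ≤ i + 1 := Nat.le_of_dvd (Nat.succ_pos i) h
        have h5 : 5 ≤ p := by
          rcases hp.eq_one_or_self_of_dvd 2 (by omega) with h | h
          · omega
          · omega
        omega
      have := FiniteField.sum_pow_units (ZMod p) (i + 1)
      rw [ZMod.card p] at this
      simpa [hne] using this
    exact (ZMod.natCast_eq_zero_iff S p).mp this
  -- finish
  rw [Gminus, map_prod]
  have step : ∀ a : (ZMod p)ˣ,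
      σ (gaussSum' η ζN (a : ZMod p).val ^ tauRep (a ^ i))
      = η c⁻¹ ^ ((a : ZMod p).val * tauRep (a ^ i)) *
        gaussSum' η ζN (a : ZMod p).val ^ tauRep (a ^ i) := by
    intro a
    rw [map_pow, hgauss, mul_pow, ← pow_mul]
  rw [Finset.prod_congr rfl fun a _ => step a, Finset.prod_mul_distrib,
    Finset.prod_pow_eq_pow_sum, ← hS]
  obtain ⟨m, hm⟩ := hpS
  rw [hm, pow_mul, hη, one_pow, one_mul]
end
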